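/- arXiv:1209.4617 — 3 statements merged into one kernel-verified Lean document; each statement's English description precedes it below -/
import Mathlib

section
/- Let 𝒢 be a snake graph and let P and P' be two perfect matchings of 𝒢 such that neither P nor P' contains an interior edge of 𝒢 and P ∩ P' = ∅. Then P ∪ P' is exactly the set of all boundary edges of 𝒢. -/
/-!
Basic definitions: tiles, snake graphs, perfect matchings, sign functions.

A tile is a unit square in the plane, identified by the coordinates of its
south-west corner.  An edge of the integer grid is encoded as a pair
`(p, b) : (ℤ × ℤ) × Bool` where `b = true` means the horizontal edge from `p`
to `p + (1,0)` and `b = false` means the vertical edge from `p` to `p + (0,1)`.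

A snake graph is a sequence of tiles `G_1, …, G_d` (`d ≥ 1`) in which each
tile `G_{i+1}` is either the tile directly to the east or directly to the
north of `G_i`; this is exactly the combinatorial content of conditions
(i)–(iii) in the definition of a snake graph.  We record the position of the
first tile and the sequence of steps (`true` = east, `false` = north).
-/

abbrev Pt : Type := ℤ × ℤ

/-- An edge of the integer grid: `(p, true)` is the horizontal unit edge with left
endpoint `p`, and `(p, false)` is the vertical unit edge with bottom endpoint `p`. -/
abbrev Edge : Type := Pt × Bool

/-- The two endpoints of an edge. -/
def Edge.ends (e : Edge) : Finset Pt :=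
  {e.1, e.1 + (if e.2 then ((1 : ℤ), (0 : ℤ)) else ((0 : ℤ), (1 : ℤ)))}

/-- The south edge of the tile with south-west corner `p`. -/
def southEdge (p : Pt) : Edge := (p, true)
/-- The north edge of the tile with south-west corner `p`. -/
def northEdge (p : Pt) : Edge := (p + ((0 : ℤ), (1 : ℤ)), true)
/-- The west edge of the tile with south-west corner `p`. -/
def westEdge (p : Pt) : Edge := (p, false)
/-- The east edge of the tile with south-west corner `p`. -/
def eastEdge (p : Pt) : Edge := (p + ((1 : ℤ), (0 : ℤ)), false)

/-- The four edges of the tile with south-west corner `p`. -/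
def tileEdges (p : Pt) : Finset Edge := {southEdge p, northEdge p, westEdge p, eastEdge p}

/-- The four vertices of the tile with south-west corner `p`. -/
def tileVerts (p : Pt) : Finset Pt :=
  {p, p + ((1 : ℤ), (0 : ℤ)), p + ((0 : ℤ), (1 : ℤ)), p + ((1 : ℤ), (1 : ℤ))}

/-- A snake graph `𝒢 = (G_1, …, G_d)`, `d ≥ 1`: a sequence of tiles in which each
tile `G_{i+1}` shares exactly one edge with `G_i`, this edge being the north edge of
`G_i` and the south edge of `G_{i+1}`, or the east edge of `G_i` and the west edge of
`G_{i+1}`.  `step i = true` means `G_{i+1}` is east of `G_i`, `step i = false` means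
`G_{i+1}` is north of `G_i`; only the values `step i` for `1 ≤ i ≤ d - 1` are
relevant. -/
structure SnakeGraph where
  d : ℕ
  one_le_d : 1 ≤ d
  base : Pt
  step : ℕ → Bool

namespace SnakeGraph

/-- The south-west corner of the `i`-th tile, `1 ≤ i ≤ d`. -/
def pos (G : SnakeGraph) (i : ℕ) : Pt :=
  G.base + ∑ j ∈ Finset.Ico 1 i,
    (if G.step j then ((1 : ℤ), (0 : ℤ)) else ((0 : ℤ), (1 : ℤ)))

/-- The set of edges of the snake graph. -/
def edges (G : SnakeGraph) : Finset Edge :=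
  (Finset.Icc 1 G.d).biUnion fun i => tileEdges (G.pos i)

/-- The set of vertices of the snake graph. -/
def verts (G : SnakeGraph) : Finset Pt :=
  (Finset.Icc 1 G.d).biUnion fun i => tileVerts (G.pos i)

/-- The interior edge `e_i` shared by the tiles `G_i` and `G_{i+1}` (`1 ≤ i ≤ d-1`). -/
def intEdge (G : SnakeGraph) (i : ℕ) : Edge :=
  if G.step i then eastEdge (G.pos i) else northEdge (G.pos i)

/-- An edge is interior if it is one of the edges `e_1, …, e_{d-1}`. -/
def IsInteriorEdge (G : SnakeGraph) (e : Edge) : Prop :=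
  ∃ i, 1 ≤ i ∧ i < G.d ∧ e = G.intEdge i

/-- A boundary edge is an edge of the snake graph which is not interior. -/
def IsBoundaryEdge (G : SnakeGraph) (e : Edge) : Prop :=
  e ∈ G.edges ∧ ¬ G.IsInteriorEdge e

/-- A perfect matching of the snake graph: a set of edges of `G` such that every
vertex of `G` is incident to exactly one edge of the set. -/
def IsPerfectMatching (G : SnakeGraph) (P : Finset Edge) : Prop :=
  (∀ e ∈ P, e ∈ G.edges) ∧ ∀ v ∈ G.verts, ∃! e, e ∈ P ∧ v ∈ Edge.ends e

/-- A sign function on the snake graph: on every tile the north and west edges have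
the same sign, the south and east edges have the same sign, and the signs of the
north and south edges are opposite.  (Signs are encoded as `Bool`.) -/
def IsSignFunction (G : SnakeGraph) (f : Edge → Bool) : Prop :=
  ∀ i, 1 ≤ i → i ≤ G.d →
    f (northEdge (G.pos i)) = f (westEdge (G.pos i)) ∧
    f (southEdge (G.pos i)) = f (eastEdge (G.pos i)) ∧
    f (northEdge (G.pos i)) = ! f (southEdge (G.pos i))

end SnakeGraph

/-! ### Auxiliary lemmas -/

namespace SnakeAux

open Finset

lemma mem_tileVerts {v p : Pt} :
    v ∈ tileVerts p ↔ v = p ∨ v = p + ((1:ℤ),(0:ℤ)) ∨ v = p + ((0:ℤ),(1:ℤ)) ∨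
      v = p + ((1:ℤ),(1:ℤ)) := by
  simp [tileVerts]

lemma mem_tileEdges {e : Edge} {p : Pt} :
    e ∈ tileEdges p ↔
      e = (p, true) ∨ e = (p + ((0:ℤ),(1:ℤ)), true) ∨ e = (p, false) ∨
        e = (p + ((1:ℤ),(0:ℤ)), false) := by
  simp [tileEdges, southEdge, northEdge, westEdge, eastEdge]

lemma pos_one (G : SnakeGraph) : G.pos 1 = G.base := by simp [SnakeGraph.pos]

lemma pos_succ (G : SnakeGraph) {i : ℕ} (hi : 1 ≤ i) :
    G.pos (i+1) = G.pos i +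
      (if G.step i then ((1:ℤ),(0:ℤ)) else ((0:ℤ),(1:ℤ))) := by
  unfold SnakeGraph.pos
  rw [Finset.sum_Ico_succ_top hi, ← add_assoc]

lemma pos_sum (G : SnakeGraph) : ∀ i : ℕ, 1 ≤ i →
    (G.pos i).1 + (G.pos i).2 = G.base.1 + G.base.2 + (i : ℤ) - 1 := by
  intro i
  induction i with
  | zero => omega
  | succ n ih =>
    intro _
    rcases Nat.eq_zero_or_pos n with h0 | h1
    · subst h0; simp [pos_one]
    · rw [pos_succ G h1]
      have := ih h1
      cases hs : G.step n <;>
        simp only [hs, if_true, if_false, Prod.fst_add, Prod.snd_add] <;>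
        push_cast <;> omega

end SnakeAux
namespace SnakeAux

open Finset

def vertsTo (G : SnakeGraph) (n : ℕ) : Finset Pt :=
  (Finset.Icc 1 n).biUnion fun i => tileVerts (G.pos i)

def edgesTo (G : SnakeGraph) (n : ℕ) : Finset Edge :=
  (Finset.Icc 1 n).biUnion fun i => tileEdges (G.pos i)

lemma verts_eq (G : SnakeGraph) : G.verts = vertsTo G G.d := rfl
lemma edges_eq (G : SnakeGraph) : G.edges = edgesTo G G.d := rfl

/-- Any vertex of the first `n` tiles either has coordinate sum at most `s + n`, or is
the north-east corner of tile `n`. -/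
lemma vertsTo_cases (G : SnakeGraph) {n : ℕ} {v : Pt} (hv : v ∈ vertsTo G n) :
    v.1 + v.2 ≤ G.base.1 + G.base.2 + (n : ℤ) ∨ v = G.pos n + ((1:ℤ),(1:ℤ)) := by
  rcases Finset.mem_biUnion.1 hv with ⟨j, hj, hvj⟩
  rw [Finset.mem_Icc] at hj
  have hps := pos_sum G j hj.1
  rcases mem_tileVerts.1 hvj with h | h | h | h
  · left; subst h; omega
  · left; subst h; simp only [Prod.fst_add, Prod.snd_add]; omega
  · left; subst h; simp only [Prod.fst_add, Prod.snd_add]; omega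
  · rcases eq_or_lt_of_le hj.2 with rfl | hlt
    · right; exact h
    · left; subst h; simp only [Prod.fst_add, Prod.snd_add]; omega

/-- Any edge of the first `n` tiles either has seed-point sum at most `s + n - 1`, or is
the north or east edge of tile `n`. -/
lemma edgesTo_cases (G : SnakeGraph) {n : ℕ} {e : Edge} (he : e ∈ edgesTo G n) :
    e.1.1 + e.1.2 ≤ G.base.1 + G.base.2 + (n : ℤ) - 1 ∨
      e = (G.pos n + ((0:ℤ),(1:ℤ)), true) ∨ e = (G.pos n + ((1:ℤ),(0:ℤ)), false) := by
  rcases Finset.mem_biUnion.1 he with ⟨j, hj, hej⟩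
  rw [Finset.mem_Icc] at hj
  have hps := pos_sum G j hj.1
  rcases mem_tileEdges.1 hej with h | h | h | h
  · left; subst h; dsimp only; omega
  · rcases eq_or_lt_of_le hj.2 with rfl | hlt
    · right; left; exact h
    · left; subst h; dsimp only [Prod.fst_add, Prod.snd_add]; omega
  · left; subst h; dsimp only; omega
  · rcases eq_or_lt_of_le hj.2 with rfl | hlt
    · right; right; exact h
    · left; subst h; simp only [Prod.fst_add, Prod.snd_add]; omega

lemma tileVerts_card (p : Pt) : (tileVerts p).card = 4 := by
  have h1 : p ≠ p + ((1:ℤ),(0:ℤ)) := by simp [Prod.ext_iff]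
  have h2 : p ≠ p + ((0:ℤ),(1:ℤ)) := by simp [Prod.ext_iff]
  have h3 : p ≠ p + ((1:ℤ),(1:ℤ)) := by simp [Prod.ext_iff]
  have h4 : p + ((1:ℤ),(0:ℤ)) ≠ p + ((0:ℤ),(1:ℤ)) := by simp [Prod.ext_iff]
  have h5 : p + ((1:ℤ),(0:ℤ)) ≠ p + ((1:ℤ),(1:ℤ)) := by simp [Prod.ext_iff]
  have h6 : p + ((0:ℤ),(1:ℤ)) ≠ p + ((1:ℤ),(1:ℤ)) := by simp [Prod.ext_iff]
  rw [tileVerts]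
  rw [Finset.card_insert_of_notMem (by simp [h1, h2, h3]),
    Finset.card_insert_of_notMem (by simp [h4, h5]),
    Finset.card_insert_of_notMem (by simp [h6]), Finset.card_singleton]

lemma tileEdges_card (p : Pt) : (tileEdges p).card = 4 := by
  have h1 : p ≠ p + ((0:ℤ),(1:ℤ)) := by simp [Prod.ext_iff]
  have h2 : p ≠ p + ((1:ℤ),(0:ℤ)) := by simp [Prod.ext_iff]
  have h3 : p + ((0:ℤ),(1:ℤ)) ≠ p + ((1:ℤ),(0:ℤ)) := by simp [Prod.ext_iff]
  rw [tileEdges, southEdge, northEdge, westEdge, eastEdge]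
  rw [Finset.card_insert_of_notMem (by simp [Prod.ext_iff, h1]),
    Finset.card_insert_of_notMem (by simp [Prod.ext_iff]),
    Finset.card_insert_of_notMem (by simp [Prod.ext_iff, h3]), Finset.card_singleton]

end SnakeAux
namespace SnakeAux

open Finset

lemma pt_add_add (p : Pt) (x1 y1 x2 y2 : ℤ) :
    p + ((x1,y1) : Pt) + ((x2,y2) : Pt) = p + ((x1+x2, y1+y2) : Pt) := by
  have h : ((x1,y1) : Pt) + ((x2,y2) : Pt) = ((x1+x2, y1+y2) : Pt) := rfl
  rw [add_assoc, h]

lemma pt_ne (p : Pt) {x1 y1 x2 y2 : ℤ} (h : ¬ (x1 = x2 ∧ y1 = y2)) :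
    p + ((x1,y1):Pt) ≠ p + ((x2,y2):Pt) := by
  intro hc
  rw [add_right_inj, Prod.mk.injEq] at hc
  exact h hc

lemma pt_sum (p : Pt) (x y : ℤ) :
    (p + ((x,y):Pt)).1 + (p + ((x,y):Pt)).2 = p.1 + p.2 + x + y := by
  simp only [Prod.fst_add, Prod.snd_add]
  ring

lemma vertsTo_succ (G : SnakeGraph) {n : ℕ} (hn : 1 ≤ n) :
    vertsTo G (n+1) = vertsTo G n ∪ tileVerts (G.pos (n+1)) := by
  rw [vertsTo, ← Finset.insert_Icc_right_eq_Icc_add_one (by omega : 1 ≤ n + 1),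
    Finset.biUnion_insert, Finset.union_comm]
  rfl

lemma edgesTo_succ (G : SnakeGraph) {n : ℕ} (hn : 1 ≤ n) :
    edgesTo G (n+1) = edgesTo G n ∪ tileEdges (G.pos (n+1)) := by
  rw [edgesTo, ← Finset.insert_Icc_right_eq_Icc_add_one (by omega : 1 ≤ n + 1),
    Finset.biUnion_insert, Finset.union_comm]
  rfl

lemma mem_vertsTo_of_tile (G : SnakeGraph) {n : ℕ} (hn : 1 ≤ n) {v : Pt}
    (h : v ∈ tileVerts (G.pos n)) : v ∈ vertsTo G n :=
  Finset.mem_biUnion.2 ⟨n, Finset.mem_Icc.2 ⟨hn, le_refl n⟩, h⟩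

lemma mem_edgesTo_of_tile (G : SnakeGraph) {n : ℕ} (hn : 1 ≤ n) {e : Edge}
    (h : e ∈ tileEdges (G.pos n)) : e ∈ edgesTo G n :=
  Finset.mem_biUnion.2 ⟨n, Finset.mem_Icc.2 ⟨hn, le_refl n⟩, h⟩

lemma step_data (G : SnakeGraph) {n : ℕ} (h1 : 1 ≤ n) :
    ∃ a b : Pt, ∃ c : Bool,
      ((a = ((1:ℤ),(0:ℤ)) ∧ b = ((0:ℤ),(1:ℤ)) ∧ c = true) ∨
        (a = ((0:ℤ),(1:ℤ)) ∧ b = ((1:ℤ),(0:ℤ)) ∧ c = false)) ∧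
      G.pos (n+1) = G.pos n + a := by
  cases hs : G.step n
  · exact ⟨_, _, _, Or.inr ⟨rfl, rfl, rfl⟩, by rw [pos_succ G h1, hs]; rfl⟩
  · exact ⟨_, _, _, Or.inl ⟨rfl, rfl, rfl⟩, by rw [pos_succ G h1, hs]; rfl⟩

lemma tile_diff_verts (G : SnakeGraph) {n : ℕ} (h1 : 1 ≤ n) :
    (tileVerts (G.pos (n+1)) \ vertsTo G n).card = 2 := by
  have hpsum := pos_sum G n h1
  obtain ⟨a, b, c, hor, hqs⟩ := step_data G h1
  set p := G.pos n with hp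
  set q := G.pos (n+1) with hq
  have hqsum : q.1 + q.2 = G.base.1 + G.base.2 + (n : ℤ) := by
    rcases hor with ⟨rfl, rfl, rfl⟩ | ⟨rfl, rfl, rfl⟩ <;> rw [hqs, pt_sum] <;> omega
  have hold1 : q ∈ vertsTo G n := by
    apply mem_vertsTo_of_tile G h1
    rw [mem_tileVerts]
    rcases hor with ⟨rfl, rfl, rfl⟩ | ⟨rfl, rfl, rfl⟩
    · exact Or.inr (Or.inl hqs)
    · exact Or.inr (Or.inr (Or.inl hqs))
  have hold2 : q + b ∈ vertsTo G n := by
    apply mem_vertsTo_of_tile G h1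
    rw [mem_tileVerts]
    refine Or.inr (Or.inr (Or.inr ?_))
    rcases hor with ⟨rfl, rfl, rfl⟩ | ⟨rfl, rfl, rfl⟩ <;> rw [hqs, pt_add_add] <;> norm_num <;> rfl
  have hnew1 : q + a ∉ vertsTo G n := by
    intro hm
    rcases vertsTo_cases G hm with h | h
    · rcases hor with ⟨rfl, rfl, rfl⟩ | ⟨rfl, rfl, rfl⟩ <;> rw [pt_sum] at h <;> omega
    · rcases hor with ⟨rfl, rfl, rfl⟩ | ⟨rfl, rfl, rfl⟩ <;>
        rw [hqs, pt_add_add] at h <;>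
        exact pt_ne p (by norm_num) h
  have hnew2 : q + ((1:ℤ),(1:ℤ)) ∉ vertsTo G n := by
    intro hm
    rcases vertsTo_cases G hm with h | h
    · rw [pt_sum] at h; omega
    · have hqp : q = p := add_right_cancel h
      rw [hqp] at hqsum; omega
  have hdiff : tileVerts q \ vertsTo G n = {q + a, q + ((1:ℤ),(1:ℤ))} := by
    ext v
    simp only [Finset.mem_sdiff, mem_tileVerts, Finset.mem_insert, Finset.mem_singleton]
    constructor
    · rintro ⟨h | h | h | h, hv⟩
      · exact absurd (h ▸ hold1) hv
      · rcases hor with ⟨rfl, rfl, rfl⟩ | ⟨rfl, rfl, rfl⟩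
        · exact Or.inl h
        · exact absurd (h ▸ hold2) hv
      · rcases hor with ⟨rfl, rfl, rfl⟩ | ⟨rfl, rfl, rfl⟩
        · exact absurd (h ▸ hold2) hv
        · exact Or.inl h
      · exact Or.inr h
    · rintro (rfl | rfl)
      · refine ⟨?_, hnew1⟩
        rcases hor with ⟨rfl, rfl, rfl⟩ | ⟨rfl, rfl, rfl⟩
        · exact Or.inr (Or.inl rfl)
        · exact Or.inr (Or.inr (Or.inl rfl))
      · exact ⟨Or.inr (Or.inr (Or.inr rfl)), hnew2⟩
  rw [hdiff, Finset.card_insert_of_notMem, Finset.card_singleton]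
  rw [Finset.mem_singleton]
  rcases hor with ⟨rfl, rfl, rfl⟩ | ⟨rfl, rfl, rfl⟩ <;> exact pt_ne q (by norm_num)

lemma vertsTo_card (G : SnakeGraph) : ∀ n : ℕ, 1 ≤ n → (vertsTo G n).card = 2*n + 2 := by
  intro n
  induction n with
  | zero => omega
  | succ n ih =>
    intro _
    rcases Nat.eq_zero_or_pos n with h0 | h1
    · subst h0
      have h : vertsTo G 1 = tileVerts (G.pos 1) := by rw [vertsTo]; simp
      rw [h, tileVerts_card]
    · rw [vertsTo_succ G h1, ← Finset.union_sdiff_self_eq_union,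
        Finset.card_union_of_disjoint Finset.disjoint_sdiff,
        ih h1, tile_diff_verts G h1]
      omega

lemma tile_diff_edges (G : SnakeGraph) {n : ℕ} (h1 : 1 ≤ n) :
    (tileEdges (G.pos (n+1)) \ edgesTo G n).card = 3 := by
  have hpsum := pos_sum G n h1
  obtain ⟨a, b, c, hor, hqs⟩ := step_data G h1
  set p := G.pos n with hp
  set q := G.pos (n+1) with hq
  have hqsum : q.1 + q.2 = G.base.1 + G.base.2 + (n : ℤ) := by
    rcases hor with ⟨rfl, rfl, rfl⟩ | ⟨rfl, rfl, rfl⟩ <;> rw [hqs, pt_sum] <;> omega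
  -- the shared edge
  have hold : ((q, !c) : Edge) ∈ edgesTo G n := by
    apply mem_edgesTo_of_tile G h1
    rw [mem_tileEdges]
    rcases hor with ⟨rfl, rfl, rfl⟩ | ⟨rfl, rfl, rfl⟩
    · exact Or.inr (Or.inr (Or.inr (by rw [hqs]; rfl)))
    · exact Or.inr (Or.inl (by rw [hqs]; rfl))
  -- the three new edges
  have hnew0 : ((q, c) : Edge) ∉ edgesTo G n := by
    intro hm
    rcases edgesTo_cases G hm with h | h | h
    · dsimp only at h; omega
    · rw [Prod.mk.injEq] at h
      rcases hor with ⟨rfl, rfl, rfl⟩ | ⟨rfl, rfl, rfl⟩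
      · exact pt_ne p (by norm_num) (hqs ▸ h.1)
      · simp at h
    · rw [Prod.mk.injEq] at h
      rcases hor with ⟨rfl, rfl, rfl⟩ | ⟨rfl, rfl, rfl⟩
      · simp at h
      · exact pt_ne p (by norm_num) (hqs ▸ h.1)
  have hnew1 : ((q + ((0:ℤ),(1:ℤ)), true) : Edge) ∉ edgesTo G n := by
    intro hm
    rcases edgesTo_cases G hm with h | h | h
    · rw [show ((q + ((0:ℤ),(1:ℤ)), true) : Edge).1 = q + ((0:ℤ),(1:ℤ)) from rfl,
        pt_sum] at h
      omega
    · rw [Prod.mk.injEq] at h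
      have := congrArg (fun v : Pt => v.1 + v.2) h.1
      rw [← hp] at this
      simp only [pt_sum] at this; omega
    · rw [Prod.mk.injEq] at h
      simp at h
  have hnew2 : ((q + ((1:ℤ),(0:ℤ)), false) : Edge) ∉ edgesTo G n := by
    intro hm
    rcases edgesTo_cases G hm with h | h | h
    · rw [show ((q + ((1:ℤ),(0:ℤ)), false) : Edge).1 = q + ((1:ℤ),(0:ℤ)) from rfl,
        pt_sum] at h
      omega
    · rw [Prod.mk.injEq] at h
      simp at h
    · rw [Prod.mk.injEq] at h
      have := congrArg (fun v : Pt => v.1 + v.2) h.1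
      rw [← hp] at this
      simp only [pt_sum] at this; omega
  have hdiff : tileEdges q \ edgesTo G n =
      {((q, c) : Edge), (q + ((0:ℤ),(1:ℤ)), true), (q + ((1:ℤ),(0:ℤ)), false)} := by
    ext e
    simp only [Finset.mem_sdiff, mem_tileEdges, Finset.mem_insert, Finset.mem_singleton]
    constructor
    · rintro ⟨h | h | h | h, he⟩
      · rcases hor with ⟨rfl, rfl, rfl⟩ | ⟨rfl, rfl, rfl⟩
        · exact Or.inl h
        · exact absurd (h ▸ hold) he
      · exact Or.inr (Or.inl h)
      · rcases hor with ⟨rfl, rfl, rfl⟩ | ⟨rfl, rfl, rfl⟩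
        · exact absurd (h ▸ hold) he
        · exact Or.inl h
      · exact Or.inr (Or.inr h)
    · rintro (rfl | rfl | rfl)
      · refine ⟨?_, hnew0⟩
        rcases hor with ⟨rfl, rfl, rfl⟩ | ⟨rfl, rfl, rfl⟩
        · exact Or.inl rfl
        · exact Or.inr (Or.inr (Or.inl rfl))
      · exact ⟨Or.inr (Or.inl rfl), hnew1⟩
      · exact ⟨Or.inr (Or.inr (Or.inr rfl)), hnew2⟩
  have hm2 : ((q + ((0:ℤ),(1:ℤ)), true) : Edge) ∉
      ({(q + ((1:ℤ),(0:ℤ)), false)} : Finset Edge) := by simp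
  have hm1 : ((q, c) : Edge) ∉
      ({(q + ((0:ℤ),(1:ℤ)), true), (q + ((1:ℤ),(0:ℤ)), false)} : Finset Edge) := by
    simp only [Finset.mem_insert, Finset.mem_singleton, Prod.mk.injEq, not_or, not_and]
    constructor <;> intro h <;> exfalso <;>
      · have := congrArg (fun v : Pt => v.1 + v.2) h
        simp only [pt_sum] at this
        omega
  rw [hdiff, Finset.card_insert_of_notMem hm1, Finset.card_insert_of_notMem hm2,
    Finset.card_singleton]

lemma edgesTo_card (G : SnakeGraph) : ∀ n : ℕ, 1 ≤ n → (edgesTo G n).card = 3*n + 1 := by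
  intro n
  induction n with
  | zero => omega
  | succ n ih =>
    intro _
    rcases Nat.eq_zero_or_pos n with h0 | h1
    · subst h0
      have h : edgesTo G 1 = tileEdges (G.pos 1) := by rw [edgesTo]; simp
      rw [h, tileEdges_card]
    · rw [edgesTo_succ G h1, ← Finset.union_sdiff_self_eq_union,
        Finset.card_union_of_disjoint Finset.disjoint_sdiff,
        ih h1, tile_diff_edges G h1]
      omega

end SnakeAux
namespace SnakeAux

open Finset

/-- The set of interior edges. -/
def intSet (G : SnakeGraph) : Finset Edge := (Finset.Ico 1 G.d).image G.intEdge

lemma intEdge_psum (G : SnakeGraph) {i : ℕ} (hi : 1 ≤ i) :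
    (G.intEdge i).1.1 + (G.intEdge i).1.2 = G.base.1 + G.base.2 + (i : ℤ) := by
  have h := pos_sum G i hi
  rw [SnakeGraph.intEdge]
  cases hs : G.step i
  · rw [if_neg (by simp), northEdge,
      show ((G.pos i + ((0:ℤ),(1:ℤ)), true) : Edge).1 = G.pos i + ((0:ℤ),(1:ℤ)) from rfl,
      pt_sum]
    omega
  · rw [if_pos rfl, eastEdge,
      show ((G.pos i + ((1:ℤ),(0:ℤ)), false) : Edge).1 = G.pos i + ((1:ℤ),(0:ℤ)) from rfl,
      pt_sum]
    omega

lemma intSet_card (G : SnakeGraph) : (intSet G).card = G.d - 1 := by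
  rw [intSet, Finset.card_image_of_injOn, Nat.card_Ico]
  intro i hi j hj hij
  simp only [Finset.coe_Ico, Set.mem_Ico] at hi hj
  have h1 := intEdge_psum G hi.1
  have h2 := intEdge_psum G hj.1
  rw [hij] at h1
  omega

lemma intEdge_mem_tile (G : SnakeGraph) (i : ℕ) : G.intEdge i ∈ tileEdges (G.pos i) := by
  rw [SnakeGraph.intEdge, mem_tileEdges]
  cases G.step i <;> simp [northEdge, eastEdge]

lemma intSet_subset (G : SnakeGraph) : intSet G ⊆ G.edges := by
  intro e he
  rcases Finset.mem_image.1 he with ⟨i, hi, rfl⟩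
  rw [Finset.mem_Ico] at hi
  exact Finset.mem_biUnion.2 ⟨i, Finset.mem_Icc.2 ⟨hi.1, by omega⟩, intEdge_mem_tile G i⟩

lemma boundary_iff (G : SnakeGraph) (e : Edge) :
    G.IsBoundaryEdge e ↔ e ∈ G.edges \ intSet G := by
  rw [SnakeGraph.IsBoundaryEdge, Finset.mem_sdiff]
  refine and_congr_right fun _ => not_congr ?_
  rw [SnakeGraph.IsInteriorEdge, intSet]
  simp only [Finset.mem_image, Finset.mem_Ico]
  constructor
  · rintro ⟨i, h1, h2, rfl⟩
    exact ⟨i, ⟨h1, h2⟩, rfl⟩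
  · rintro ⟨i, ⟨h1, h2⟩, rfl⟩
    exact ⟨i, h1, h2, rfl⟩

lemma ends_subset {e : Edge} {p : Pt} (he : e ∈ tileEdges p) : e.ends ⊆ tileVerts p := by
  intro v hv
  rw [mem_tileVerts]
  rcases mem_tileEdges.1 he with rfl | rfl | rfl | rfl <;>
    simp only [Edge.ends, if_true, if_false, Finset.mem_insert, Finset.mem_singleton] at hv <;>
    rcases hv with rfl | rfl
  · exact Or.inl rfl
  · exact Or.inr (Or.inl rfl)
  · exact Or.inr (Or.inr (Or.inl rfl))
  · right; right; right; rw [pt_add_add]; norm_num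
  · exact Or.inl rfl
  · exact Or.inr (Or.inr (Or.inl rfl))
  · exact Or.inr (Or.inl rfl)
  · right; right; right; rw [pt_add_add]; norm_num

lemma ends_card (e : Edge) : e.ends.card = 2 := by
  have h : e.1 ≠ e.1 + (if e.2 then ((1:ℤ),(0:ℤ)) else ((0:ℤ),(1:ℤ))) := by
    cases he : e.2
    · rw [if_neg (by simp)]
      intro hc
      have := congrArg (fun v : Pt => v.1 + v.2) hc
      simp only [pt_sum] at this
      omega
    · rw [if_pos rfl]
      intro hc
      have := congrArg (fun v : Pt => v.1 + v.2) hc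
      simp only [pt_sum] at this
      omega
  rw [Edge.ends, Finset.card_insert_of_notMem (by simpa using h), Finset.card_singleton]

lemma ends_subset_verts (G : SnakeGraph) {e : Edge} (he : e ∈ G.edges) :
    e.ends ⊆ G.verts := by
  rcases Finset.mem_biUnion.1 he with ⟨i, hi, hei⟩
  exact fun v hv => Finset.mem_biUnion.2 ⟨i, hi, ends_subset hei hv⟩

lemma matching_card (G : SnakeGraph) {P : Finset Edge} (h : G.IsPerfectMatching P) :
    2 * P.card = G.verts.card := by
  obtain ⟨hPE, hPV⟩ := h
  have hcover : G.verts = P.biUnion Edge.ends := by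
    ext v
    constructor
    · intro hv
      obtain ⟨e, ⟨heP, hve⟩, -⟩ := hPV v hv
      exact Finset.mem_biUnion.2 ⟨e, heP, hve⟩
    · intro hv
      rcases Finset.mem_biUnion.1 hv with ⟨e, heP, hve⟩
      exact ends_subset_verts G (hPE e heP) hve
  have hdisj : ∀ e ∈ P, ∀ f ∈ P, e ≠ f → Disjoint e.ends f.ends := by
    intro e he f hf hef
    rw [Finset.disjoint_left]
    intro v hve hvf
    have hv : v ∈ G.verts := ends_subset_verts G (hPE e he) hve
    obtain ⟨g, -, hg⟩ := hPV v hv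
    exact hef ((hg e ⟨he, hve⟩).trans (hg f ⟨hf, hvf⟩).symm)
  rw [hcover, Finset.card_biUnion hdisj]
  simp only [ends_card]
  rw [Finset.sum_const, smul_eq_mul, mul_comm]

end SnakeAux
/-- Let `𝒢` be a snake graph and `P`, `P'` two perfect matchings of
`𝒢` such that neither `P` nor `P'` contains an interior edge of `𝒢` and
`P ∩ P' = ∅`.  Then `P ∪ P'` is exactly the set of all boundary edges of `𝒢`. -/
theorem snake_matchings_union_eq_boundary (G : SnakeGraph) (P P' : Finset Edge)
    (hP : G.IsPerfectMatching P) (hP' : G.IsPerfectMatching P')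
    (hPint : ∀ e ∈ P, ¬ G.IsInteriorEdge e)
    (hP'int : ∀ e ∈ P', ¬ G.IsInteriorEdge e)
    (hdisj : ∀ e : Edge, ¬ (e ∈ P ∧ e ∈ P')) :
    ∀ e : Edge, e ∈ P ∪ P' ↔ G.IsBoundaryEdge e := by
  intro e
  have hPcard := SnakeAux.matching_card G hP
  have hP'card := SnakeAux.matching_card G hP'
  have hvcard : G.verts.card = 2 * G.d + 2 := by
    rw [SnakeAux.verts_eq]; exact SnakeAux.vertsTo_card G G.d G.one_le_d
  have hecard : G.edges.card = 3 * G.d + 1 := by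
    rw [SnakeAux.edges_eq]; exact SnakeAux.edgesTo_card G G.d G.one_le_d
  have hBcard : (G.edges \ SnakeAux.intSet G).card = 2 * G.d + 2 := by
    rw [Finset.card_sdiff_of_subset (SnakeAux.intSet_subset G), hecard, SnakeAux.intSet_card]
    have := G.one_le_d
    omega
  have hsub : P ∪ P' ⊆ G.edges \ SnakeAux.intSet G := by
    intro x hx
    rw [← SnakeAux.boundary_iff]
    rcases Finset.mem_union.1 hx with h | h
    · exact ⟨hP.1 x h, hPint x h⟩
    · exact ⟨hP'.1 x h, hP'int x h⟩
  have hucard : (P ∪ P').card = 2 * G.d + 2 := by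
    rw [Finset.card_union_of_disjoint
      (Finset.disjoint_left.2 fun a ha ha' => hdisj a ⟨ha, ha'⟩)]
    omega
  have heq : P ∪ P' = G.edges \ SnakeAux.intSet G :=
    Finset.eq_of_subset_of_card_le hsub (by omega)
  rw [heq, SnakeAux.boundary_iff]
end

section
/- Let 𝒢 be a snake graph with sign function f, and let P be a perfect matching of 𝒢 consisting only of boundary edges. Let NE denote the set of boundary edges of 𝒢 that are north or east edges of their tile, and SW the set of boundary edges that are south or west edges of their tile. Then any two edges of P that both lie in NE, or both lie in SW, have the same sign under f, and any edge of P in NE and any edge of P in SW have opposite signs under f. -/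
namespace SnakeGraph

/-- A boundary edge of `G` which is the north or the east edge of one of its tiles. -/
def IsNE (G : SnakeGraph) (e : Edge) : Prop :=
  G.IsBoundaryEdge e ∧
    ∃ i, 1 ≤ i ∧ i ≤ G.d ∧ (e = northEdge (G.pos i) ∨ e = eastEdge (G.pos i))

/-- A boundary edge of `G` which is the south or the west edge of one of its tiles. -/
def IsSW (G : SnakeGraph) (e : Edge) : Prop :=
  G.IsBoundaryEdge e ∧
    ∃ i, 1 ≤ i ∧ i ≤ G.d ∧ (e = southEdge (G.pos i) ∨ e = westEdge (G.pos i))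

end SnakeGraph

namespace SnakeSign

open SnakeGraph

private def par (n : ℤ) : Bool := decide (n % 2 = 1)

private lemma par_congr {a b : ℤ} (h : (a - b) % 2 = 0) : par a = par b := by
  unfold par; rw [decide_eq_decide]; omega

private lemma par_not {a b : ℤ} (h : (a - b) % 2 = 1) : par a = !par b := by
  unfold par; rw [← decide_not, decide_eq_decide]; omega

private lemma pos_one (G : SnakeGraph) : G.pos 1 = G.base := by
  simp [SnakeGraph.pos]

private lemma pos_succ (G : SnakeGraph) (i : ℕ) (h : 1 ≤ i) :
    G.pos (i+1) = G.pos i + (if G.step i then ((1:ℤ),(0:ℤ)) else ((0:ℤ),(1:ℤ))) := by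
  unfold SnakeGraph.pos
  rw [Finset.sum_Ico_succ_top h, add_assoc]

private lemma pos_sum (G : SnakeGraph) (i : ℕ) (h : 1 ≤ i) :
    (G.pos i).1 + (G.pos i).2 = G.base.1 + G.base.2 + (i:ℤ) - 1 := by
  induction i, h using Nat.le_induction with
  | base => rw [pos_one]; push_cast; ring
  | succ n hn ih =>
      rw [pos_succ G n hn]
      cases h : G.step n <;> simp [Prod.fst_add, Prod.snd_add] <;> push_cast <;> omega

private lemma pos_succ_east {G : SnakeGraph} {i : ℕ} (hi : 1 ≤ i) (hs : G.step i = true) :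
    (G.pos (i+1)).1 = (G.pos i).1 + 1 ∧ (G.pos (i+1)).2 = (G.pos i).2 := by
  have h := pos_succ G i hi
  rw [hs] at h; simp at h; rw [h]; simp

private lemma pos_succ_north {G : SnakeGraph} {i : ℕ} (hi : 1 ≤ i) (hs : G.step i = false) :
    (G.pos (i+1)).1 = (G.pos i).1 ∧ (G.pos (i+1)).2 = (G.pos i).2 + 1 := by
  have h := pos_succ G i hi
  rw [hs] at h; simp at h; rw [h]; simp

private def tb (G : SnakeGraph) (p : Pt) : Bool :=
  decide (p ∈ (Finset.Icc 1 G.d).image G.pos)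

private lemma tb_iff (G : SnakeGraph) (p : Pt) :
    tb G p = true ↔ ∃ i, 1 ≤ i ∧ i ≤ G.d ∧ G.pos i = p := by
  simp [tb, Finset.mem_image, Finset.mem_Icc, and_assoc]

private def uval (G : SnakeGraph) (e : Edge) : Bool :=
  Bool.xor (par (e.1.1 + e.1.2 - G.base.1 - G.base.2))
    (tb G (if e.2 then ((e.1.1, e.1.2 - 1) : Pt) else e.1))

private lemma mem_tileEdges {e : Edge} {p : Pt} :
    e ∈ tileEdges p ↔ e = southEdge p ∨ e = northEdge p ∨ e = westEdge p ∨ e = eastEdge p := by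
  simp [tileEdges]

private lemma mem_tileVerts {v p : Pt} :
    v ∈ tileVerts p ↔ v = p ∨ v = p + ((1:ℤ),(0:ℤ)) ∨ v = p + ((0:ℤ),(1:ℤ)) ∨ v = p + ((1:ℤ),(1:ℤ)) := by
  simp [tileVerts]

private lemma mem_edges {G : SnakeGraph} {e : Edge} :
    e ∈ G.edges ↔ ∃ i, 1 ≤ i ∧ i ≤ G.d ∧ e ∈ tileEdges (G.pos i) := by
  simp [SnakeGraph.edges, Finset.mem_Icc, and_assoc]

private lemma mem_verts {G : SnakeGraph} {v : Pt} :
    v ∈ G.verts ↔ ∃ i, 1 ≤ i ∧ i ≤ G.d ∧ v ∈ tileVerts (G.pos i) := by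
  simp [SnakeGraph.verts, Finset.mem_Icc, and_assoc]

private lemma mem_ends {v : Pt} {e : Edge} :
    v ∈ e.ends ↔ v = e.1 ∨ v = e.1 + (if e.2 then ((1:ℤ),(0:ℤ)) else ((0:ℤ),(1:ℤ))) := by
  simp [Edge.ends]

private lemma ends_subset {e : Edge} {p : Pt} (he : e ∈ tileEdges p) :
    ∀ v ∈ e.ends, v ∈ tileVerts p := by
  intro v hv
  rcases mem_tileEdges.1 he with rfl | rfl | rfl | rfl <;>
    rcases mem_ends.1 hv with rfl | rfl <;>
    rw [mem_tileVerts] <;>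
    simp [southEdge, northEdge, westEdge, eastEdge, Prod.ext_iff] <;> omega

private lemma pos_idx {G : SnakeGraph} {i j : ℕ} (hi : 1 ≤ i) (hj : 1 ≤ j)
    {a b c d : ℤ} (h1 : (G.pos i).1 + a = (G.pos j).1 + c)
    (h2 : (G.pos i).2 + b = (G.pos j).2 + d) :
    (i:ℤ) + a + b = (j:ℤ) + c + d := by
  have := pos_sum G i hi; have := pos_sum G j hj; omega

end SnakeSign
namespace SnakeSign

open SnakeGraph

private lemma uval_south {G : SnakeGraph} {i : ℕ} (h1 : 1 ≤ i) (h2 : i ≤ G.d)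
    (hni : ¬ G.IsInteriorEdge (southEdge (G.pos i))) :
    uval G (southEdge (G.pos i)) = par ((i:ℤ) - 1) := by
  have hs := pos_sum G i h1
  have htb : tb G ((G.pos i).1, (G.pos i).2 - 1) = false := by
    rw [Bool.eq_false_iff]
    intro htb
    obtain ⟨j, hj1, hjd, hpj⟩ := (tb_iff G _).1 htb
    have hsj := pos_sum G j hj1
    have hpx := congrArg Prod.fst hpj
    have hpy := congrArg Prod.snd hpj
    simp only at hpx hpy
    have hji : j + 1 = i := by omega
    have hstep : G.step j = false := by
      cases hst : G.step j with
      | false => rfl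
      | true =>
        obtain ⟨ha, hb⟩ := pos_succ_east hj1 hst
        rw [hji] at ha hb
        omega
    obtain ⟨ha, hb⟩ := pos_succ_north hj1 hstep
    rw [hji] at ha hb
    refine hni ⟨j, hj1, by omega, ?_⟩
    rw [SnakeGraph.intEdge, hstep]
    have hq : G.pos i = G.pos j + ((0:ℤ),(1:ℤ)) := by
      rw [Prod.ext_iff]; constructor <;> simp <;> omega
    simp [southEdge, northEdge, hq]
  have he : uval G (southEdge (G.pos i))
      = Bool.xor (par ((G.pos i).1 + (G.pos i).2 - G.base.1 - G.base.2))
          (tb G ((G.pos i).1, (G.pos i).2 - 1)) := rfl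
  rw [he, htb, Bool.xor_false]
  exact par_congr (by omega)

private lemma uval_north {G : SnakeGraph} {i : ℕ} (h1 : 1 ≤ i) (h2 : i ≤ G.d) :
    uval G (northEdge (G.pos i)) = !par (i:ℤ) := by
  have hs := pos_sum G i h1
  have htb : tb G ((G.pos i + ((0:ℤ),(1:ℤ))).1, (G.pos i + ((0:ℤ),(1:ℤ))).2 - 1) = true := by
    rw [tb_iff]
    refine ⟨i, h1, h2, ?_⟩
    rw [Prod.ext_iff]; constructor <;> simp
  have he : uval G (northEdge (G.pos i))
      = Bool.xor (par ((G.pos i + ((0:ℤ),(1:ℤ))).1 + (G.pos i + ((0:ℤ),(1:ℤ))).2 - G.base.1 - G.base.2))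
          (tb G ((G.pos i + ((0:ℤ),(1:ℤ))).1, (G.pos i + ((0:ℤ),(1:ℤ))).2 - 1)) := rfl
  rw [he, htb, Bool.xor_true]
  have : par ((G.pos i + ((0:ℤ),(1:ℤ))).1 + (G.pos i + ((0:ℤ),(1:ℤ))).2 - G.base.1 - G.base.2)
      = par (i:ℤ) := by
    apply par_congr
    simp [Prod.fst_add, Prod.snd_add]
    omega
  rw [this]

private lemma uval_west {G : SnakeGraph} {i : ℕ} (h1 : 1 ≤ i) (h2 : i ≤ G.d) :
    uval G (westEdge (G.pos i)) = !par ((i:ℤ) - 1) := by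
  have hs := pos_sum G i h1
  have htb : tb G (G.pos i) = true := by
    rw [tb_iff]; exact ⟨i, h1, h2, rfl⟩
  have he : uval G (westEdge (G.pos i))
      = Bool.xor (par ((G.pos i).1 + (G.pos i).2 - G.base.1 - G.base.2))
          (tb G (G.pos i)) := rfl
  rw [he, htb, Bool.xor_true]
  have : par ((G.pos i).1 + (G.pos i).2 - G.base.1 - G.base.2) = par ((i:ℤ) - 1) :=
    par_congr (by omega)
  rw [this]

private lemma uval_east {G : SnakeGraph} {i : ℕ} (h1 : 1 ≤ i) (h2 : i ≤ G.d)
    (hni : ¬ G.IsInteriorEdge (eastEdge (G.pos i))) :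
    uval G (eastEdge (G.pos i)) = par (i:ℤ) := by
  have hs := pos_sum G i h1
  have htb : tb G (G.pos i + ((1:ℤ),(0:ℤ))) = false := by
    rw [Bool.eq_false_iff]
    intro htb
    obtain ⟨j, hj1, hjd, hpj⟩ := (tb_iff G _).1 htb
    have hsj := pos_sum G j hj1
    have hpx := congrArg Prod.fst hpj
    have hpy := congrArg Prod.snd hpj
    simp only [Prod.fst_add, Prod.snd_add] at hpx hpy
    have hji : i + 1 = j := by omega
    have hstep : G.step i = true := by
      cases hst : G.step i with
      | true => rfl
      | false =>
        obtain ⟨ha, hb⟩ := pos_succ_north h1 hst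
        rw [hji] at ha hb
        omega
    refine hni ⟨i, h1, by omega, ?_⟩
    rw [SnakeGraph.intEdge, hstep]
    simp
  have he : uval G (eastEdge (G.pos i))
      = Bool.xor (par ((G.pos i + ((1:ℤ),(0:ℤ))).1 + (G.pos i + ((1:ℤ),(0:ℤ))).2 - G.base.1 - G.base.2))
          (tb G (G.pos i + ((1:ℤ),(0:ℤ)))) := rfl
  rw [he, htb, Bool.xor_false]
  apply par_congr
  simp [Prod.fst_add, Prod.snd_add]
  omega

end SnakeSign
namespace SnakeSign

open SnakeGraph

private lemma tv_A (p : Pt) : p ∈ tileVerts p := by simp [tileVerts]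
private lemma tv_B (p : Pt) : p + ((1:ℤ),(0:ℤ)) ∈ tileVerts p := by simp [tileVerts]
private lemma tv_C (p : Pt) : p + ((0:ℤ),(1:ℤ)) ∈ tileVerts p := by simp [tileVerts]
private lemma tv_D (p : Pt) : p + ((1:ℤ),(1:ℤ)) ∈ tileVerts p := by simp [tileVerts]

private lemma endsS1 (p : Pt) : p ∈ (southEdge p).ends := by simp [southEdge, Edge.ends]
private lemma endsS2 (p : Pt) : p + ((1:ℤ),(0:ℤ)) ∈ (southEdge p).ends := by
  simp [southEdge, Edge.ends]
private lemma endsN1 (p : Pt) : p + ((0:ℤ),(1:ℤ)) ∈ (northEdge p).ends := by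
  simp [northEdge, Edge.ends]
private lemma endsN2 (p : Pt) : p + ((1:ℤ),(1:ℤ)) ∈ (northEdge p).ends := by
  rw [mem_ends]
  right
  rw [Prod.ext_iff]
  constructor <;> simp [northEdge]
private lemma endsW1 (p : Pt) : p ∈ (westEdge p).ends := by simp [westEdge, Edge.ends]
private lemma endsW2 (p : Pt) : p + ((0:ℤ),(1:ℤ)) ∈ (westEdge p).ends := by
  simp [westEdge, Edge.ends]
private lemma endsE1 (p : Pt) : p + ((1:ℤ),(0:ℤ)) ∈ (eastEdge p).ends := by
  simp [eastEdge, Edge.ends]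
private lemma endsE2 (p : Pt) : p + ((1:ℤ),(1:ℤ)) ∈ (eastEdge p).ends := by
  rw [mem_ends]
  right
  rw [Prod.ext_iff]
  constructor <;> simp [eastEdge]

private lemma corner_A {p : Pt} {e : Edge} (he : e ∈ tileEdges p) (hv : p ∈ e.ends) :
    e = southEdge p ∨ e = westEdge p := by
  rcases mem_tileEdges.1 he with rfl | rfl | rfl | rfl
  · exact Or.inl rfl
  · exfalso
    rcases mem_ends.1 hv with h | h <;>
    · have hx := congrArg Prod.fst h
      have hy := congrArg Prod.snd h
      simp [northEdge, Prod.fst_add, Prod.snd_add] at hx hy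
      try omega
  · exact Or.inr rfl
  · exfalso
    rcases mem_ends.1 hv with h | h <;>
    · have hx := congrArg Prod.fst h
      have hy := congrArg Prod.snd h
      simp [eastEdge, Prod.fst_add, Prod.snd_add] at hx hy
      try omega

private lemma corner_B {p : Pt} {e : Edge} (he : e ∈ tileEdges p)
    (hv : p + ((1:ℤ),(0:ℤ)) ∈ e.ends) :
    e = southEdge p ∨ e = eastEdge p := by
  rcases mem_tileEdges.1 he with rfl | rfl | rfl | rfl
  · exact Or.inl rfl
  · exfalso
    rcases mem_ends.1 hv with h | h <;>
    · have hx := congrArg Prod.fst h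
      have hy := congrArg Prod.snd h
      simp [northEdge, Prod.fst_add, Prod.snd_add] at hx hy
      try omega
  · exfalso
    rcases mem_ends.1 hv with h | h <;>
    · have hx := congrArg Prod.fst h
      have hy := congrArg Prod.snd h
      simp [westEdge, Prod.fst_add, Prod.snd_add] at hx hy
      try omega
  · exact Or.inr rfl

private lemma corner_C {p : Pt} {e : Edge} (he : e ∈ tileEdges p)
    (hv : p + ((0:ℤ),(1:ℤ)) ∈ e.ends) :
    e = northEdge p ∨ e = westEdge p := by
  rcases mem_tileEdges.1 he with rfl | rfl | rfl | rfl
  · exfalso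
    rcases mem_ends.1 hv with h | h <;>
    · have hx := congrArg Prod.fst h
      have hy := congrArg Prod.snd h
      simp [southEdge, Prod.fst_add, Prod.snd_add] at hx hy
      try omega
  · exact Or.inl rfl
  · exact Or.inr rfl
  · exfalso
    rcases mem_ends.1 hv with h | h <;>
    · have hx := congrArg Prod.fst h
      have hy := congrArg Prod.snd h
      simp [eastEdge, Prod.fst_add, Prod.snd_add] at hx hy
      try omega

private lemma corner_D {p : Pt} {e : Edge} (he : e ∈ tileEdges p)
    (hv : p + ((1:ℤ),(1:ℤ)) ∈ e.ends) :
    e = northEdge p ∨ e = eastEdge p := by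
  rcases mem_tileEdges.1 he with rfl | rfl | rfl | rfl
  · exfalso
    rcases mem_ends.1 hv with h | h <;>
    · have hx := congrArg Prod.fst h
      have hy := congrArg Prod.snd h
      simp [southEdge, Prod.fst_add, Prod.snd_add] at hx hy
      try omega
  · exact Or.inl rfl
  · exfalso
    rcases mem_ends.1 hv with h | h <;>
    · have hx := congrArg Prod.fst h
      have hy := congrArg Prod.snd h
      simp [westEdge, Prod.fst_add, Prod.snd_add] at hx hy
      try omega
  · exact Or.inr rfl

private lemma vert_sum_bound {G : SnakeGraph} {j : ℕ} (hj : 1 ≤ j) {v : Pt}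
    (hv : v ∈ tileVerts (G.pos j)) :
    v.1 + v.2 ≤ G.base.1 + G.base.2 + (j:ℤ) + 1 ∧
      (v.1 + v.2 = G.base.1 + G.base.2 + (j:ℤ) + 1 → v = G.pos j + ((1:ℤ),(1:ℤ))) := by
  have hs := pos_sum G j hj
  rcases mem_tileVerts.1 hv with rfl | rfl | rfl | rfl
  · constructor
    · omega
    · intro h; exfalso; omega
  · refine ⟨by simp; omega, fun h => ?_⟩
    exfalso
    simp [Prod.fst_add, Prod.snd_add] at h
    omega
  · refine ⟨by simp; omega, fun h => ?_⟩
    exfalso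
    simp [Prod.fst_add, Prod.snd_add] at h
    omega
  · exact ⟨by simp; omega, fun _ => rfl⟩

private def trunc (G : SnakeGraph) (k : ℕ) (hk : 1 ≤ k) : SnakeGraph :=
  ⟨k, hk, G.base, G.step⟩

private lemma trunc_d (G : SnakeGraph) (k : ℕ) (hk : 1 ≤ k) : (trunc G k hk).d = k := rfl

private lemma trunc_pos (G : SnakeGraph) (k : ℕ) (hk : 1 ≤ k) (i : ℕ) :
    (trunc G k hk).pos i = G.pos i := rfl

private lemma trunc_mem_edges {G : SnakeGraph} {k : ℕ} {hk : 1 ≤ k} {e : Edge} {j : ℕ}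
    (hj : 1 ≤ j) (hjk : j ≤ k) (ht : e ∈ tileEdges (G.pos j)) :
    e ∈ (trunc G k hk).edges :=
  mem_edges.2 ⟨j, hj, hjk, ht⟩

private lemma trunc_verts_subset {G : SnakeGraph} {k : ℕ} {hk : 1 ≤ k} (hkd : k ≤ G.d) :
    ∀ v ∈ (trunc G k hk).verts, v ∈ G.verts := by
  intro v hv
  obtain ⟨j, hj1, hjk, ht⟩ := mem_verts.1 hv
  exact mem_verts.2 ⟨j, hj1, le_trans hjk hkd, ht⟩

private lemma trunc_interior {G : SnakeGraph} {k : ℕ} {hk : 1 ≤ k} (hkd : k ≤ G.d) {e : Edge}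
    (h : (trunc G k hk).IsInteriorEdge e) : G.IsInteriorEdge e := by
  obtain ⟨i, h1, h2, h3⟩ := h
  exact ⟨i, h1, by simp [trunc_d] at h2; omega, h3⟩

private lemma tb_trunc {G : SnakeGraph} {k : ℕ} {hk : 1 ≤ k} (hkd : k ≤ G.d) {p : Pt}
    (hne : ∀ i, k < i → i ≤ G.d → G.pos i ≠ p) :
    tb (trunc G k hk) p = tb G p := by
  by_cases h : tb G p = true
  · rw [h]
    obtain ⟨i, h1, h2, h3⟩ := (tb_iff G p).1 h
    have hik : i ≤ k := by
      by_contra hc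
      exact hne i (by omega) h2 h3
    exact (tb_iff _ p).2 ⟨i, h1, hik, h3⟩
  · rw [Bool.not_eq_true] at h
    rw [h, Bool.eq_false_iff]
    intro hc
    obtain ⟨i, h1, h2, h3⟩ := (tb_iff _ p).1 hc
    rw [Bool.eq_false_iff] at h
    exact h ((tb_iff G p).2 ⟨i, h1, le_trans h2 hkd, h3⟩)

private lemma uval_trunc {G : SnakeGraph} {k : ℕ} {hk : 1 ≤ k} (hkd : k ≤ G.d) {e : Edge}
    (hne : ∀ i, k < i → i ≤ G.d →
      G.pos i ≠ (if e.2 then ((e.1.1, e.1.2 - 1) : Pt) else e.1)) :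
    uval (trunc G k hk) e = uval G e := by
  unfold uval
  rw [tb_trunc hkd hne]
  rfl

end SnakeSign
namespace SnakeSign

open SnakeGraph

private lemma core : ∀ (n : ℕ) (G : SnakeGraph) (P : Finset Edge),
    G.d = n + 1 →
    (∀ e ∈ P, e ∈ G.edges) →
    (∀ v ∈ G.verts, ∃! e, e ∈ P ∧ v ∈ Edge.ends e) →
    (∀ e ∈ P, G.IsBoundaryEdge e) →
    ∃ c : Bool, ∀ e ∈ P, uval G e = c := by
  intro n
  induction n with
  | zero =>
    intro G P hd hPe hPm hPb
    have h1d : 1 ≤ G.d := G.one_le_d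
    have huniq : ∀ v ∈ G.verts, ∀ e1 ∈ P, ∀ e2 ∈ P, v ∈ e1.ends → v ∈ e2.ends → e1 = e2 := by
      intro v hv e1 h1 e2 h2 hv1 hv2
      obtain ⟨e, -, hu⟩ := hPm v hv
      rw [hu e1 ⟨h1, hv1⟩, hu e2 ⟨h2, hv2⟩]
    have tile1 : ∀ e ∈ P, e ∈ tileEdges (G.pos 1) := by
      intro e he
      obtain ⟨j, hj1, hjd, ht⟩ := mem_edges.1 (hPe e he)
      have : j = 1 := by omega
      subst this
      exact ht
    have hAv : G.pos 1 ∈ G.verts := mem_verts.2 ⟨1, le_rfl, h1d, tv_A _⟩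
    have hBv : G.pos 1 + ((1:ℤ),(0:ℤ)) ∈ G.verts := mem_verts.2 ⟨1, le_rfl, h1d, tv_B _⟩
    have hCv : G.pos 1 + ((0:ℤ),(1:ℤ)) ∈ G.verts := mem_verts.2 ⟨1, le_rfl, h1d, tv_C _⟩
    obtain ⟨e₀, ⟨he₀P, he₀v⟩, -⟩ := hPm _ hAv
    rcases corner_A (tile1 e₀ he₀P) he₀v with rfl | rfl
    · refine ⟨par 0, fun e heP => ?_⟩
      rcases mem_tileEdges.1 (tile1 e heP) with rfl | rfl | rfl | rfl
      · rw [uval_south le_rfl h1d (hPb _ heP).2]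
        exact par_congr (by omega)
      · rw [uval_north le_rfl h1d]
        exact (par_not (a := 0) (by omega)).symm
      · exfalso
        have := huniq _ hAv _ he₀P _ heP (endsS1 _) (endsW1 _)
        simp [southEdge, westEdge] at this
      · exfalso
        have := huniq _ hBv _ he₀P _ heP (endsS2 _) (endsE1 _)
        simp [southEdge, eastEdge] at this
    · refine ⟨!par 0, fun e heP => ?_⟩
      rcases mem_tileEdges.1 (tile1 e heP) with rfl | rfl | rfl | rfl
      · exfalso
        have := huniq _ hAv _ he₀P _ heP (endsW1 _) (endsS1 _)
        simp [southEdge, westEdge] at this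
      · exfalso
        have := huniq _ hCv _ he₀P _ heP (endsW2 _) (endsN1 _)
        simp [northEdge, westEdge] at this
      · rw [uval_west le_rfl h1d]
        exact congrArg Bool.not (par_congr (by omega))
      · rw [uval_east le_rfl h1d (hPb _ heP).2]
        exact par_not (by omega)
  | succ m ih =>
    intro G P hd hPe hPm hPb
    have h1d : 1 ≤ m + 1 := by omega
    have hm1d : m + 1 ≤ G.d := by omega
    have hm2d : m + 2 ≤ G.d := by omega
    have hsum1 := pos_sum G (m+1) h1d
    have hsum2 := pos_sum G (m+2) (by omega)
    have huniq : ∀ v ∈ G.verts, ∀ e1 ∈ P, ∀ e2 ∈ P, v ∈ e1.ends → v ∈ e2.ends → e1 = e2 := by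
      intro v hv e1 h1 e2 h2 hv1 hv2
      obtain ⟨e, -, hu⟩ := hPm v hv
      rw [hu e1 ⟨h1, hv1⟩, hu e2 ⟨h2, hv2⟩]
    have hAv : G.pos (m+2) ∈ G.verts := mem_verts.2 ⟨m+2, by omega, hm2d, tv_A _⟩
    have hBv : G.pos (m+2) + ((1:ℤ),(0:ℤ)) ∈ G.verts := mem_verts.2 ⟨m+2, by omega, hm2d, tv_B _⟩
    have hCv : G.pos (m+2) + ((0:ℤ),(1:ℤ)) ∈ G.verts := mem_verts.2 ⟨m+2, by omega, hm2d, tv_C _⟩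
    have hDv : G.pos (m+2) + ((1:ℤ),(1:ℤ)) ∈ G.verts := mem_verts.2 ⟨m+2, by omega, hm2d, tv_D _⟩
    have hhigh : ∀ {j : ℕ}, 1 ≤ j → j ≤ m + 1 → ∀ {v : Pt}, v ∈ tileVerts (G.pos j) →
        v.1 + v.2 ≤ G.base.1 + G.base.2 + (m:ℤ) + 2 ∧
        (v.1 + v.2 = G.base.1 + G.base.2 + (m:ℤ) + 2 → v = G.pos (m+1) + ((1:ℤ),(1:ℤ))) := by
      intro j hj1 hjm v hv
      obtain ⟨hb, heqc⟩ := vert_sum_bound hj1 hv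
      have hsj := pos_sum G j hj1
      constructor
      · omega
      · intro h
        have hj : j = m+1 := by omega
        subst hj
        exact heqc (by omega)
    have hsum_excl : ∀ {j : ℕ}, 1 ≤ j → j ≤ m+1 → ∀ {v : Pt}, v ∈ tileVerts (G.pos j) →
        G.base.1 + G.base.2 + (m:ℤ) + 3 ≤ v.1 + v.2 → False := by
      intro j hj1 hjm v hv hs
      obtain ⟨hb, -⟩ := hhigh hj1 hjm hv
      omega
    have locD : ∀ e ∈ P, (G.pos (m+2) + ((1:ℤ),(1:ℤ)) : Pt) ∈ e.ends →
        e = northEdge (G.pos (m+2)) ∨ e = eastEdge (G.pos (m+2)) := by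
      intro e heP hv
      obtain ⟨j, hj1, hjd, ht⟩ := mem_edges.1 (hPe e heP)
      by_cases hj : j ≤ m + 1
      · exfalso
        exact hsum_excl hj1 hj (ends_subset ht _ hv)
          (by simp [Prod.fst_add, Prod.snd_add]; omega)
      · have hj2 : j = m + 2 := by omega
        subst hj2
        exact corner_D ht hv
    cases hstep : G.step (m+1) with
    | true =>
      obtain ⟨hex, hey⟩ := pos_succ_east h1d hstep
      rw [show m+1+1 = m+2 from rfl] at hex hey
      have hWint : G.IsInteriorEdge (westEdge (G.pos (m+2))) := by
        refine ⟨m+1, h1d, by omega, ?_⟩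
        rw [SnakeGraph.intEdge, hstep, if_pos rfl]
        simp [westEdge, eastEdge, Prod.ext_iff]
        omega
      have hWnotP : westEdge (G.pos (m+2)) ∉ P := fun h => (hPb _ h).2 hWint
      have hgE : westEdge (G.pos (m+2)) = eastEdge (G.pos (m+1)) := by
        simp [westEdge, eastEdge, Prod.ext_iff]
        omega
      have hBexcl : ∀ {j : ℕ}, 1 ≤ j → j ≤ m+1 → ∀ {v : Pt}, v ∈ tileVerts (G.pos j) →
          v = G.pos (m+2) + ((1:ℤ),(0:ℤ)) → False := by
        intro j hj1 hjm v hv hveq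
        subst hveq
        obtain ⟨hb, heqc⟩ := hhigh hj1 hjm hv
        have h2 := heqc (by simp [Prod.fst_add, Prod.snd_add]; omega)
        have hy2 := congrArg Prod.snd h2
        simp [Prod.snd_add] at hy2
        omega
      have locB : ∀ e ∈ P, (G.pos (m+2) + ((1:ℤ),(0:ℤ)) : Pt) ∈ e.ends →
          e = southEdge (G.pos (m+2)) ∨ e = eastEdge (G.pos (m+2)) := by
        intro e heP hv
        obtain ⟨j, hj1, hjd, ht⟩ := mem_edges.1 (hPe e heP)
        by_cases hj : j ≤ m + 1
        · exact absurd rfl (fun h => hBexcl hj1 hj (ends_subset ht _ hv) h)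
        · have hj2 : j = m + 2 := by omega
          subst hj2
          exact corner_B ht hv
      by_cases hE : eastEdge (G.pos (m+2)) ∈ P
      · -- Case 1 east : E ∈ P
        have hSnot : southEdge (G.pos (m+2)) ∉ P := by
          intro hS
          have := huniq _ hBv _ hS _ hE (endsS2 _) (endsE1 _)
          simp [southEdge, eastEdge] at this
        have hNnot : northEdge (G.pos (m+2)) ∉ P := by
          intro hNn
          have := huniq _ hDv _ hNn _ hE (endsN2 _) (endsE2 _)
          simp [northEdge, eastEdge] at this
        have htile : ∀ e ∈ P, e ≠ eastEdge (G.pos (m+2)) →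
            ∃ j, 1 ≤ j ∧ j ≤ m + 1 ∧ e ∈ tileEdges (G.pos j) := by
          intro e heP hne
          obtain ⟨j, hj1, hjd, ht⟩ := mem_edges.1 (hPe e heP)
          by_cases hj : j ≤ m + 1
          · exact ⟨j, hj1, hj, ht⟩
          · have hj2 : j = m+2 := by omega
            subst hj2
            rcases mem_tileEdges.1 ht with rfl | rfl | rfl | rfl
            · exact absurd heP hSnot
            · exact absurd heP hNnot
            · exact absurd heP hWnotP
            · exact absurd rfl hne
        obtain ⟨e₀, ⟨he₀P, he₀v⟩, -⟩ := hPm _ hAv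
        have he₀ne : e₀ ≠ eastEdge (G.pos (m+2)) := by
          intro h
          subst h
          rcases mem_ends.1 he₀v with h | h <;>
          · have hx := congrArg Prod.fst h
            have hy := congrArg Prod.snd h
            simp [eastEdge, Prod.fst_add, Prod.snd_add] at hx hy
            try omega
        have he₀u : uval G e₀ = par (m:ℤ) := by
          obtain ⟨j, hj1, hjm, ht⟩ := htile e₀ he₀P he₀ne
          have hvt := ends_subset ht _ he₀v
          have hsj := pos_sum G j hj1
          rcases mem_tileVerts.1 hvt with h | h | h | h
          · exfalso
            have hx := congrArg Prod.fst h
            have hy := congrArg Prod.snd h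
            omega
          · have hx := congrArg Prod.fst h
            have hy := congrArg Prod.snd h
            simp [Prod.fst_add, Prod.snd_add] at hx hy
            have hjm1 : j = m+1 := by omega
            subst hjm1
            rcases corner_B ht (h ▸ he₀v) with rfl | rfl
            · rw [uval_south h1d hm1d (hPb _ he₀P).2]
              exact par_congr (by omega)
            · exfalso
              refine (hPb _ he₀P).2 ⟨m+1, h1d, by omega, ?_⟩
              rw [SnakeGraph.intEdge, hstep, if_pos rfl]
          · exfalso
            have hx := congrArg Prod.fst h
            have hy := congrArg Prod.snd h
            simp [Prod.fst_add, Prod.snd_add] at hx hy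
            have hjm1 : j = m+1 := by omega
            subst hjm1
            omega
          · have hx := congrArg Prod.fst h
            have hy := congrArg Prod.snd h
            simp [Prod.fst_add, Prod.snd_add] at hx hy
            have hjm0 : j = m := by omega
            rw [hjm0] at hj1 ht h hx hy
            rcases corner_D ht (h ▸ he₀v) with rfl | rfl
            · exfalso
              have hsm : G.step m = false := by
                cases hsm : G.step m with
                | false => rfl
                | true =>
                  obtain ⟨ha, hb⟩ := pos_succ_east hj1 hsm
                  omega
              refine (hPb _ he₀P).2 ⟨m, hj1, by omega, ?_⟩
              rw [SnakeGraph.intEdge, hsm, if_neg (by simp)]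
            · rw [uval_east hj1 (by omega) (hPb _ he₀P).2]
        have hP'e : ∀ e ∈ P.erase (eastEdge (G.pos (m+2))), e ∈ (trunc G (m+1) h1d).edges := by
          intro e he
          obtain ⟨j, hj1, hjm, ht⟩ :=
            htile e (Finset.mem_of_mem_erase he) (Finset.ne_of_mem_erase he)
          exact trunc_mem_edges hj1 hjm ht
        have hP'm : ∀ v ∈ (trunc G (m+1) h1d).verts,
            ∃! e, e ∈ P.erase (eastEdge (G.pos (m+2))) ∧ v ∈ e.ends := by
          intro v hv
          obtain ⟨j, hj1, hjk, hvt⟩ := mem_verts.1 hv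
          have hjk' : j ≤ m + 1 := hjk
          have hvG : v ∈ G.verts := mem_verts.2 ⟨j, hj1, by omega, hvt⟩
          obtain ⟨e, ⟨heP, hev⟩, -⟩ := hPm v hvG
          have hne : e ≠ eastEdge (G.pos (m+2)) := by
            intro hh
            subst hh
            rcases mem_ends.1 hev with h | h
            · exact hBexcl hj1 hjk' hvt h
            · refine hsum_excl hj1 hjk' hvt ?_
              rw [h]
              simp [eastEdge, Prod.fst_add, Prod.snd_add]
              omega
          refine ⟨e, ⟨Finset.mem_erase.2 ⟨hne, heP⟩, hev⟩, ?_⟩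
          rintro e' ⟨he', hve'⟩
          exact huniq v hvG e' (Finset.mem_of_mem_erase he') e heP hve' hev
        have hP'b : ∀ e ∈ P.erase (eastEdge (G.pos (m+2))),
            (trunc G (m+1) h1d).IsBoundaryEdge e :=
          fun e he => ⟨hP'e e he,
            fun hint => (hPb e (Finset.mem_of_mem_erase he)).2 (trunc_interior hm1d hint)⟩
        obtain ⟨c', hc'⟩ := ih (trunc G (m+1) h1d) (P.erase (eastEdge (G.pos (m+2)))) rfl
          hP'e hP'm hP'b
        have htrans : ∀ e ∈ P.erase (eastEdge (G.pos (m+2))),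
            uval (trunc G (m+1) h1d) e = uval G e := by
          intro e he
          obtain ⟨j, hj1, hjm, ht⟩ :=
            htile e (Finset.mem_of_mem_erase he) (Finset.ne_of_mem_erase he)
          apply uval_trunc hm1d
          intro i hi hid hpi
          have hi2 : i = m + 2 := by omega
          subst hi2
          have hsj := pos_sum G j hj1
          rcases mem_tileEdges.1 ht with rfl | rfl | rfl | rfl
          · have hx := congrArg Prod.fst hpi
            have hy := congrArg Prod.snd hpi
            simp [southEdge] at hx hy
            omega
          · have hx := congrArg Prod.fst hpi
            have hy := congrArg Prod.snd hpi
            simp [northEdge, Prod.fst_add, Prod.snd_add] at hx hy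
            omega
          · have hx := congrArg Prod.fst hpi
            have hy := congrArg Prod.snd hpi
            simp [westEdge] at hx hy
            omega
          · have hx := congrArg Prod.fst hpi
            have hy := congrArg Prod.snd hpi
            simp [eastEdge, Prod.fst_add, Prod.snd_add] at hx hy
            have hjm1 : j = m + 1 := by omega
            subst hjm1
            refine (hPb _ (Finset.mem_of_mem_erase he)).2 ⟨m+1, h1d, by omega, ?_⟩
            rw [SnakeGraph.intEdge, hstep, if_pos rfl]
        have he₀P' : e₀ ∈ P.erase (eastEdge (G.pos (m+2))) := Finset.mem_erase.2 ⟨he₀ne, he₀P⟩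
        have hc'val : c' = par (m:ℤ) := by
          rw [← hc' e₀ he₀P', htrans e₀ he₀P', he₀u]
        refine ⟨par (m:ℤ), fun e heP => ?_⟩
        by_cases hee : e = eastEdge (G.pos (m+2))
        · subst hee
          rw [uval_east (by omega) hm2d (hPb _ heP).2]
          exact par_congr (by omega)
        · have hmem : e ∈ P.erase (eastEdge (G.pos (m+2))) := Finset.mem_erase.2 ⟨hee, heP⟩
          rw [← htrans e hmem, hc' e hmem, hc'val]
      · -- Case 2 east : E ∉ P
        have hSP : southEdge (G.pos (m+2)) ∈ P := by
          obtain ⟨e, ⟨heP, hev⟩, -⟩ := hPm _ hBv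
          rcases locB e heP hev with rfl | rfl
          · exact heP
          · exact absurd heP hE
        have hNP : northEdge (G.pos (m+2)) ∈ P := by
          obtain ⟨e, ⟨heP, hev⟩, -⟩ := hPm _ hDv
          rcases locD e heP hev with rfl | rfl
          · exact heP
          · exact absurd heP hE
        have htile2 : ∀ e ∈ P, e ≠ southEdge (G.pos (m+2)) → e ≠ northEdge (G.pos (m+2)) →
            ∃ j, 1 ≤ j ∧ j ≤ m + 1 ∧ e ∈ tileEdges (G.pos j) := by
          intro e heP hne1 hne2
          obtain ⟨j, hj1, hjd, ht⟩ := mem_edges.1 (hPe e heP)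
          by_cases hj : j ≤ m+1
          · exact ⟨j, hj1, hj, ht⟩
          · have : j = m+2 := by omega
            subst this
            rcases mem_tileEdges.1 ht with rfl | rfl | rfl | rfl
            · exact absurd rfl hne1
            · exact absurd rfl hne2
            · exact absurd heP hWnotP
            · exact absurd heP hE
        have hP2e : ∀ e ∈ insert (westEdge (G.pos (m+2)))
            ((P.erase (southEdge (G.pos (m+2)))).erase (northEdge (G.pos (m+2)))),
            e ∈ (trunc G (m+1) h1d).edges := by
          intro e he
          rcases Finset.mem_insert.1 he with rfl | he2
          · rw [hgE]
            exact trunc_mem_edges h1d le_rfl (mem_tileEdges.2 (Or.inr (Or.inr (Or.inr rfl))))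
          · have heP := Finset.mem_of_mem_erase (Finset.mem_of_mem_erase he2)
            have hne2 := Finset.ne_of_mem_erase he2
            have hne1 := Finset.ne_of_mem_erase (Finset.mem_of_mem_erase he2)
            obtain ⟨j, hj1, hjm, ht⟩ := htile2 e heP hne1 hne2
            exact trunc_mem_edges hj1 hjm ht
        have hP2m : ∀ v ∈ (trunc G (m+1) h1d).verts,
            ∃! e, e ∈ insert (westEdge (G.pos (m+2)))
              ((P.erase (southEdge (G.pos (m+2)))).erase (northEdge (G.pos (m+2)))) ∧
              v ∈ e.ends := by
          intro v hv
          obtain ⟨j, hj1, hjk, hvt⟩ := mem_verts.1 hv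
          have hjk' : j ≤ m + 1 := hjk
          have hvG : v ∈ G.verts := mem_verts.2 ⟨j, hj1, by omega, hvt⟩
          by_cases hvA : v = G.pos (m+2)
          · refine ⟨westEdge (G.pos (m+2)),
              ⟨Finset.mem_insert_self _ _, by rw [hvA]; exact endsW1 _⟩, ?_⟩
            rintro e' ⟨he', hve'⟩
            rcases Finset.mem_insert.1 he' with rfl | he2
            · rfl
            · exfalso
              have heP := Finset.mem_of_mem_erase (Finset.mem_of_mem_erase he2)
              have heq := huniq v hvG e' heP _ hSP hve' (by rw [hvA]; exact endsS1 _)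
              exact (Finset.ne_of_mem_erase (Finset.mem_of_mem_erase he2)) heq
          · by_cases hvC : v = G.pos (m+2) + ((0:ℤ),(1:ℤ))
            · refine ⟨westEdge (G.pos (m+2)),
                ⟨Finset.mem_insert_self _ _, by rw [hvC]; exact endsW2 _⟩, ?_⟩
              rintro e' ⟨he', hve'⟩
              rcases Finset.mem_insert.1 he' with rfl | he2
              · rfl
              · exfalso
                have heP := Finset.mem_of_mem_erase (Finset.mem_of_mem_erase he2)
                have heq := huniq v hvG e' heP _ hNP hve' (by rw [hvC]; exact endsN1 _)
                exact (Finset.ne_of_mem_erase he2) heq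
            · obtain ⟨e, ⟨heP, hev⟩, -⟩ := hPm v hvG
              have hneS : e ≠ southEdge (G.pos (m+2)) := by
                intro hh
                subst hh
                rcases mem_ends.1 hev with h | h
                · exact hvA h
                · exact hBexcl hj1 hjk' hvt h
              have hneN : e ≠ northEdge (G.pos (m+2)) := by
                intro hh
                subst hh
                rcases mem_ends.1 hev with h | h
                · exact hvC h
                · refine hsum_excl hj1 hjk' hvt ?_
                  rw [h]
                  simp [northEdge, Prod.fst_add, Prod.snd_add]
                  omega
              refine ⟨e, ⟨Finset.mem_insert_of_mem
                (Finset.mem_erase.2 ⟨hneN, Finset.mem_erase.2 ⟨hneS, heP⟩⟩), hev⟩, ?_⟩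
              rintro e' ⟨he', hve'⟩
              rcases Finset.mem_insert.1 he' with rfl | he2
              · exfalso
                rcases mem_ends.1 hve' with h | h
                · exact hvA h
                · exact hvC h
              · exact huniq v hvG e'
                  (Finset.mem_of_mem_erase (Finset.mem_of_mem_erase he2)) e heP hve' hev
        have hP2b : ∀ e ∈ insert (westEdge (G.pos (m+2)))
            ((P.erase (southEdge (G.pos (m+2)))).erase (northEdge (G.pos (m+2)))),
            (trunc G (m+1) h1d).IsBoundaryEdge e := by
          intro e he
          refine ⟨hP2e e he, ?_⟩
          rcases Finset.mem_insert.1 he with rfl | he2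
          · rintro ⟨j, hj1, hj2, hje⟩
            have hj2' : j < m + 1 := hj2
            have hsj := pos_sum G j hj1
            rw [show (trunc G (m+1) h1d).intEdge j = G.intEdge j from rfl,
              SnakeGraph.intEdge] at hje
            cases hsj2 : G.step j with
            | true =>
              rw [hsj2, if_pos rfl] at hje
              have hx := congrArg (fun q : Edge => q.1.1) hje
              have hy := congrArg (fun q : Edge => q.1.2) hje
              simp [westEdge, eastEdge, Prod.fst_add, Prod.snd_add] at hx hy
              omega
            | false =>
              rw [hsj2, if_neg (by simp)] at hje
              have hb := congrArg (fun q : Edge => q.2) hje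
              simp [westEdge, northEdge] at hb
          · exact fun hint =>
              (hPb e (Finset.mem_of_mem_erase (Finset.mem_of_mem_erase he2))).2
                (trunc_interior hm1d hint)
        obtain ⟨c', hc'⟩ := ih (trunc G (m+1) h1d) _ rfl hP2e hP2m hP2b
        have htrans : ∀ e ∈ (P.erase (southEdge (G.pos (m+2)))).erase (northEdge (G.pos (m+2))),
            uval (trunc G (m+1) h1d) e = uval G e := by
          intro e he
          have heP := Finset.mem_of_mem_erase (Finset.mem_of_mem_erase he)
          have hne2 := Finset.ne_of_mem_erase he
          have hne1 := Finset.ne_of_mem_erase (Finset.mem_of_mem_erase he)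
          obtain ⟨j, hj1, hjm, ht⟩ := htile2 e heP hne1 hne2
          apply uval_trunc hm1d
          intro i hi hid hpi
          have hi2 : i = m + 2 := by omega
          subst hi2
          have hsj := pos_sum G j hj1
          rcases mem_tileEdges.1 ht with rfl | rfl | rfl | rfl
          · have hx := congrArg Prod.fst hpi
            have hy := congrArg Prod.snd hpi
            simp [southEdge] at hx hy
            omega
          · have hx := congrArg Prod.fst hpi
            have hy := congrArg Prod.snd hpi
            simp [northEdge, Prod.fst_add, Prod.snd_add] at hx hy
            omega
          · have hx := congrArg Prod.fst hpi
            have hy := congrArg Prod.snd hpi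
            simp [westEdge] at hx hy
            omega
          · have hx := congrArg Prod.fst hpi
            have hy := congrArg Prod.snd hpi
            simp [eastEdge, Prod.fst_add, Prod.snd_add] at hx hy
            have hjm1 : j = m + 1 := by omega
            subst hjm1
            refine (hPb _ heP).2 ⟨m+1, h1d, by omega, ?_⟩
            rw [SnakeGraph.intEdge, hstep, if_pos rfl]
        have hgu : uval (trunc G (m+1) h1d) (westEdge (G.pos (m+2))) = par ((m:ℤ)+1) := by
          rw [hgE]
          have hbint : ¬ (trunc G (m+1) h1d).IsInteriorEdge (eastEdge (G.pos (m+1))) := by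
            have hh := (hP2b _ (Finset.mem_insert_self _ _)).2
            rw [hgE] at hh
            exact hh
          have := uval_east (G := trunc G (m+1) h1d) (i := m+1) h1d le_rfl hbint
          exact this.trans (par_congr (by omega))
        have hc'val : c' = par ((m:ℤ)+1) := by
          rw [← hc' _ (Finset.mem_insert_self _ _), hgu]
        refine ⟨par ((m:ℤ)+1), fun e heP => ?_⟩
        by_cases heS : e = southEdge (G.pos (m+2))
        · subst heS
          rw [uval_south (by omega) hm2d (hPb _ heP).2]
          exact par_congr (by omega)
        · by_cases heN : e = northEdge (G.pos (m+2))
          · subst heN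
            rw [uval_north (by omega) hm2d]
            exact (par_not (by omega)).symm
          · have hmem2 : e ∈ (P.erase (southEdge (G.pos (m+2)))).erase
                (northEdge (G.pos (m+2))) :=
              Finset.mem_erase.2 ⟨heN, Finset.mem_erase.2 ⟨heS, heP⟩⟩
            rw [← htrans e hmem2, hc' e (Finset.mem_insert_of_mem hmem2), hc'val]
    | false =>
      obtain ⟨hex, hey⟩ := pos_succ_north h1d hstep
      rw [show m+1+1 = m+2 from rfl] at hex hey
      have hSint : G.IsInteriorEdge (southEdge (G.pos (m+2))) := by
        refine ⟨m+1, h1d, by omega, ?_⟩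
        rw [SnakeGraph.intEdge, hstep, if_neg (by simp)]
        simp [southEdge, northEdge, Prod.ext_iff]
        omega
      have hSnotP : southEdge (G.pos (m+2)) ∉ P := fun h => (hPb _ h).2 hSint
      have hgN : southEdge (G.pos (m+2)) = northEdge (G.pos (m+1)) := by
        simp [southEdge, northEdge, Prod.ext_iff]
        omega
      have hCexcl : ∀ {j : ℕ}, 1 ≤ j → j ≤ m+1 → ∀ {v : Pt}, v ∈ tileVerts (G.pos j) →
          v = G.pos (m+2) + ((0:ℤ),(1:ℤ)) → False := by
        intro j hj1 hjm v hv hveq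
        subst hveq
        obtain ⟨hb, heqc⟩ := hhigh hj1 hjm hv
        have h2 := heqc (by simp [Prod.fst_add, Prod.snd_add]; omega)
        have hx2 := congrArg Prod.fst h2
        simp [Prod.fst_add] at hx2
        omega
      have locC : ∀ e ∈ P, (G.pos (m+2) + ((0:ℤ),(1:ℤ)) : Pt) ∈ e.ends →
          e = northEdge (G.pos (m+2)) ∨ e = westEdge (G.pos (m+2)) := by
        intro e heP hv
        obtain ⟨j, hj1, hjd, ht⟩ := mem_edges.1 (hPe e heP)
        by_cases hj : j ≤ m + 1
        · exact absurd rfl (fun h => hCexcl hj1 hj (ends_subset ht _ hv) h)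
        · have hj2 : j = m + 2 := by omega
          subst hj2
          exact corner_C ht hv
      by_cases hN : northEdge (G.pos (m+2)) ∈ P
      · -- Case 1 north : N ∈ P
        have hWnot : westEdge (G.pos (m+2)) ∉ P := by
          intro hW
          have := huniq _ hCv _ hW _ hN (endsW2 _) (endsN1 _)
          simp [westEdge, northEdge] at this
        have hEnot : eastEdge (G.pos (m+2)) ∉ P := by
          intro hEp
          have := huniq _ hDv _ hEp _ hN (endsE2 _) (endsN2 _)
          simp [northEdge, eastEdge] at this
        have htile : ∀ e ∈ P, e ≠ northEdge (G.pos (m+2)) →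
            ∃ j, 1 ≤ j ∧ j ≤ m + 1 ∧ e ∈ tileEdges (G.pos j) := by
          intro e heP hne
          obtain ⟨j, hj1, hjd, ht⟩ := mem_edges.1 (hPe e heP)
          by_cases hj : j ≤ m + 1
          · exact ⟨j, hj1, hj, ht⟩
          · have hj2 : j = m+2 := by omega
            subst hj2
            rcases mem_tileEdges.1 ht with rfl | rfl | rfl | rfl
            · exact absurd heP hSnotP
            · exact absurd rfl hne
            · exact absurd heP hWnot
            · exact absurd heP hEnot
        obtain ⟨e₀, ⟨he₀P, he₀v⟩, -⟩ := hPm _ hBv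
        have he₀ne : e₀ ≠ northEdge (G.pos (m+2)) := by
          intro h
          subst h
          rcases mem_ends.1 he₀v with h | h <;>
          · have hx := congrArg Prod.fst h
            have hy := congrArg Prod.snd h
            simp [northEdge, Prod.fst_add, Prod.snd_add] at hx hy
            try omega
        have he₀u : uval G e₀ = !par (m:ℤ) := by
          obtain ⟨j, hj1, hjm, ht⟩ := htile e₀ he₀P he₀ne
          have hvt := ends_subset ht _ he₀v
          have hsj := pos_sum G j hj1
          rcases mem_tileVerts.1 hvt with h | h | h | h
          · exfalso
            have hx := congrArg Prod.fst h
            have hy := congrArg Prod.snd h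
            simp [Prod.fst_add, Prod.snd_add] at hx hy
            omega
          · exfalso
            have hx := congrArg Prod.fst h
            have hy := congrArg Prod.snd h
            simp [Prod.fst_add, Prod.snd_add] at hx hy
            omega
          · exfalso
            have hx := congrArg Prod.fst h
            have hy := congrArg Prod.snd h
            simp [Prod.fst_add, Prod.snd_add] at hx hy
            have hjm1 : j = m+2 := by omega
            omega
          · have hx := congrArg Prod.fst h
            have hy := congrArg Prod.snd h
            simp [Prod.fst_add, Prod.snd_add] at hx hy
            have hjm1 : j = m+1 := by omega
            subst hjm1
            rcases corner_D ht (h ▸ he₀v) with rfl | rfl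
            · exfalso
              refine (hPb _ he₀P).2 ⟨m+1, h1d, by omega, ?_⟩
              rw [SnakeGraph.intEdge, hstep, if_neg (by simp)]
            · rw [uval_east h1d hm1d (hPb _ he₀P).2]
              exact par_not (by omega)
        have hP'e : ∀ e ∈ P.erase (northEdge (G.pos (m+2))), e ∈ (trunc G (m+1) h1d).edges := by
          intro e he
          obtain ⟨j, hj1, hjm, ht⟩ :=
            htile e (Finset.mem_of_mem_erase he) (Finset.ne_of_mem_erase he)
          exact trunc_mem_edges hj1 hjm ht
        have hP'm : ∀ v ∈ (trunc G (m+1) h1d).verts,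
            ∃! e, e ∈ P.erase (northEdge (G.pos (m+2))) ∧ v ∈ e.ends := by
          intro v hv
          obtain ⟨j, hj1, hjk, hvt⟩ := mem_verts.1 hv
          have hjk' : j ≤ m + 1 := hjk
          have hvG : v ∈ G.verts := mem_verts.2 ⟨j, hj1, by omega, hvt⟩
          obtain ⟨e, ⟨heP, hev⟩, -⟩ := hPm v hvG
          have hne : e ≠ northEdge (G.pos (m+2)) := by
            intro hh
            subst hh
            rcases mem_ends.1 hev with h | h
            · exact hCexcl hj1 hjk' hvt h
            · refine hsum_excl hj1 hjk' hvt ?_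
              rw [h]
              simp [northEdge, Prod.fst_add, Prod.snd_add]
              omega
          refine ⟨e, ⟨Finset.mem_erase.2 ⟨hne, heP⟩, hev⟩, ?_⟩
          rintro e' ⟨he', hve'⟩
          exact huniq v hvG e' (Finset.mem_of_mem_erase he') e heP hve' hev
        have hP'b : ∀ e ∈ P.erase (northEdge (G.pos (m+2))),
            (trunc G (m+1) h1d).IsBoundaryEdge e :=
          fun e he => ⟨hP'e e he,
            fun hint => (hPb e (Finset.mem_of_mem_erase he)).2 (trunc_interior hm1d hint)⟩
        obtain ⟨c', hc'⟩ := ih (trunc G (m+1) h1d) (P.erase (northEdge (G.pos (m+2)))) rfl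
          hP'e hP'm hP'b
        have htrans : ∀ e ∈ P.erase (northEdge (G.pos (m+2))),
            uval (trunc G (m+1) h1d) e = uval G e := by
          intro e he
          obtain ⟨j, hj1, hjm, ht⟩ :=
            htile e (Finset.mem_of_mem_erase he) (Finset.ne_of_mem_erase he)
          apply uval_trunc hm1d
          intro i hi hid hpi
          have hi2 : i = m + 2 := by omega
          subst hi2
          have hsj := pos_sum G j hj1
          rcases mem_tileEdges.1 ht with rfl | rfl | rfl | rfl
          · have hx := congrArg Prod.fst hpi
            have hy := congrArg Prod.snd hpi
            simp [southEdge] at hx hy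
            omega
          · have hx := congrArg Prod.fst hpi
            have hy := congrArg Prod.snd hpi
            simp [northEdge, Prod.fst_add, Prod.snd_add] at hx hy
            omega
          · have hx := congrArg Prod.fst hpi
            have hy := congrArg Prod.snd hpi
            simp [westEdge] at hx hy
            omega
          · have hx := congrArg Prod.fst hpi
            have hy := congrArg Prod.snd hpi
            simp [eastEdge, Prod.fst_add, Prod.snd_add] at hx hy
            have hjm1 : j = m + 1 := by omega
            rw [hjm1] at hx hy
            omega
        have he₀P' : e₀ ∈ P.erase (northEdge (G.pos (m+2))) := Finset.mem_erase.2 ⟨he₀ne, he₀P⟩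
        have hc'val : c' = !par (m:ℤ) := by
          rw [← hc' e₀ he₀P', htrans e₀ he₀P', he₀u]
        refine ⟨!par (m:ℤ), fun e heP => ?_⟩
        by_cases hee : e = northEdge (G.pos (m+2))
        · subst hee
          rw [uval_north (by omega) hm2d]
          congr 1
          exact par_congr (by omega)
        · have hmem : e ∈ P.erase (northEdge (G.pos (m+2))) := Finset.mem_erase.2 ⟨hee, heP⟩
          rw [← htrans e hmem, hc' e hmem, hc'val]
      · -- Case 2 north : N ∉ P
        have hWP : westEdge (G.pos (m+2)) ∈ P := by
          obtain ⟨e, ⟨heP, hev⟩, -⟩ := hPm _ hCv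
          rcases locC e heP hev with rfl | rfl
          · exact absurd heP hN
          · exact heP
        have hEP : eastEdge (G.pos (m+2)) ∈ P := by
          obtain ⟨e, ⟨heP, hev⟩, -⟩ := hPm _ hDv
          rcases locD e heP hev with rfl | rfl
          · exact absurd heP hN
          · exact heP
        have htile2 : ∀ e ∈ P, e ≠ westEdge (G.pos (m+2)) → e ≠ eastEdge (G.pos (m+2)) →
            ∃ j, 1 ≤ j ∧ j ≤ m + 1 ∧ e ∈ tileEdges (G.pos j) := by
          intro e heP hne1 hne2
          obtain ⟨j, hj1, hjd, ht⟩ := mem_edges.1 (hPe e heP)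
          by_cases hj : j ≤ m+1
          · exact ⟨j, hj1, hj, ht⟩
          · have : j = m+2 := by omega
            subst this
            rcases mem_tileEdges.1 ht with rfl | rfl | rfl | rfl
            · exact absurd heP hSnotP
            · exact absurd heP hN
            · exact absurd rfl hne1
            · exact absurd rfl hne2
        have hP2e : ∀ e ∈ insert (southEdge (G.pos (m+2)))
            ((P.erase (westEdge (G.pos (m+2)))).erase (eastEdge (G.pos (m+2)))),
            e ∈ (trunc G (m+1) h1d).edges := by
          intro e he
          rcases Finset.mem_insert.1 he with rfl | he2
          · rw [hgN]
            exact trunc_mem_edges h1d le_rfl (mem_tileEdges.2 (Or.inr (Or.inl rfl)))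
          · have heP := Finset.mem_of_mem_erase (Finset.mem_of_mem_erase he2)
            have hne2 := Finset.ne_of_mem_erase he2
            have hne1 := Finset.ne_of_mem_erase (Finset.mem_of_mem_erase he2)
            obtain ⟨j, hj1, hjm, ht⟩ := htile2 e heP hne1 hne2
            exact trunc_mem_edges hj1 hjm ht
        have hP2m : ∀ v ∈ (trunc G (m+1) h1d).verts,
            ∃! e, e ∈ insert (southEdge (G.pos (m+2)))
              ((P.erase (westEdge (G.pos (m+2)))).erase (eastEdge (G.pos (m+2)))) ∧
              v ∈ e.ends := by
          intro v hv
          obtain ⟨j, hj1, hjk, hvt⟩ := mem_verts.1 hv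
          have hjk' : j ≤ m + 1 := hjk
          have hvG : v ∈ G.verts := mem_verts.2 ⟨j, hj1, by omega, hvt⟩
          by_cases hvA : v = G.pos (m+2)
          · refine ⟨southEdge (G.pos (m+2)),
              ⟨Finset.mem_insert_self _ _, by rw [hvA]; exact endsS1 _⟩, ?_⟩
            rintro e' ⟨he', hve'⟩
            rcases Finset.mem_insert.1 he' with rfl | he2
            · rfl
            · exfalso
              have heP := Finset.mem_of_mem_erase (Finset.mem_of_mem_erase he2)
              have heq := huniq v hvG e' heP _ hWP hve' (by rw [hvA]; exact endsW1 _)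
              exact (Finset.ne_of_mem_erase (Finset.mem_of_mem_erase he2)) heq
          · by_cases hvB : v = G.pos (m+2) + ((1:ℤ),(0:ℤ))
            · refine ⟨southEdge (G.pos (m+2)),
                ⟨Finset.mem_insert_self _ _, by rw [hvB]; exact endsS2 _⟩, ?_⟩
              rintro e' ⟨he', hve'⟩
              rcases Finset.mem_insert.1 he' with rfl | he2
              · rfl
              · exfalso
                have heP := Finset.mem_of_mem_erase (Finset.mem_of_mem_erase he2)
                have heq := huniq v hvG e' heP _ hEP hve' (by rw [hvB]; exact endsE1 _)
                exact (Finset.ne_of_mem_erase he2) heq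
            · obtain ⟨e, ⟨heP, hev⟩, -⟩ := hPm v hvG
              have hneW : e ≠ westEdge (G.pos (m+2)) := by
                intro hh
                subst hh
                rcases mem_ends.1 hev with h | h
                · exact hvA h
                · exact hCexcl hj1 hjk' hvt h
              have hneE : e ≠ eastEdge (G.pos (m+2)) := by
                intro hh
                subst hh
                rcases mem_ends.1 hev with h | h
                · exact hvB h
                · refine hsum_excl hj1 hjk' hvt ?_
                  rw [h]
                  simp [eastEdge, Prod.fst_add, Prod.snd_add]
                  omega
              refine ⟨e, ⟨Finset.mem_insert_of_mem
                (Finset.mem_erase.2 ⟨hneE, Finset.mem_erase.2 ⟨hneW, heP⟩⟩), hev⟩, ?_⟩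
              rintro e' ⟨he', hve'⟩
              rcases Finset.mem_insert.1 he' with rfl | he2
              · exfalso
                rcases mem_ends.1 hve' with h | h
                · exact hvA h
                · exact hvB h
              · exact huniq v hvG e'
                  (Finset.mem_of_mem_erase (Finset.mem_of_mem_erase he2)) e heP hve' hev
        have hP2b : ∀ e ∈ insert (southEdge (G.pos (m+2)))
            ((P.erase (westEdge (G.pos (m+2)))).erase (eastEdge (G.pos (m+2)))),
            (trunc G (m+1) h1d).IsBoundaryEdge e := by
          intro e he
          refine ⟨hP2e e he, ?_⟩
          rcases Finset.mem_insert.1 he with rfl | he2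
          · rintro ⟨j, hj1, hj2, hje⟩
            have hj2' : j < m + 1 := hj2
            have hsj := pos_sum G j hj1
            rw [show (trunc G (m+1) h1d).intEdge j = G.intEdge j from rfl,
              SnakeGraph.intEdge] at hje
            cases hsj2 : G.step j with
            | false =>
              rw [hsj2, if_neg (by simp)] at hje
              have hx := congrArg (fun q : Edge => q.1.1) hje
              have hy := congrArg (fun q : Edge => q.1.2) hje
              simp [southEdge, northEdge, Prod.fst_add, Prod.snd_add] at hx hy
              omega
            | true =>
              rw [hsj2, if_pos rfl] at hje
              have hb := congrArg (fun q : Edge => q.2) hje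
              simp [southEdge, eastEdge] at hb
          · exact fun hint =>
              (hPb e (Finset.mem_of_mem_erase (Finset.mem_of_mem_erase he2))).2
                (trunc_interior hm1d hint)
        obtain ⟨c', hc'⟩ := ih (trunc G (m+1) h1d) _ rfl hP2e hP2m hP2b
        have htrans : ∀ e ∈ (P.erase (westEdge (G.pos (m+2)))).erase (eastEdge (G.pos (m+2))),
            uval (trunc G (m+1) h1d) e = uval G e := by
          intro e he
          have heP := Finset.mem_of_mem_erase (Finset.mem_of_mem_erase he)
          have hne2 := Finset.ne_of_mem_erase he
          have hne1 := Finset.ne_of_mem_erase (Finset.mem_of_mem_erase he)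
          obtain ⟨j, hj1, hjm, ht⟩ := htile2 e heP hne1 hne2
          apply uval_trunc hm1d
          intro i hi hid hpi
          have hi2 : i = m + 2 := by omega
          subst hi2
          have hsj := pos_sum G j hj1
          rcases mem_tileEdges.1 ht with rfl | rfl | rfl | rfl
          · have hx := congrArg Prod.fst hpi
            have hy := congrArg Prod.snd hpi
            simp [southEdge] at hx hy
            omega
          · have hx := congrArg Prod.fst hpi
            have hy := congrArg Prod.snd hpi
            simp [northEdge, Prod.fst_add, Prod.snd_add] at hx hy
            omega
          · have hx := congrArg Prod.fst hpi
            have hy := congrArg Prod.snd hpi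
            simp [westEdge] at hx hy
            omega
          · have hx := congrArg Prod.fst hpi
            have hy := congrArg Prod.snd hpi
            simp [eastEdge, Prod.fst_add, Prod.snd_add] at hx hy
            have hjm1 : j = m + 1 := by omega
            rw [hjm1] at hx hy
            omega
        have hgu : uval (trunc G (m+1) h1d) (southEdge (G.pos (m+2))) = !par ((m:ℤ)+1) := by
          rw [hgN]
          have := uval_north (G := trunc G (m+1) h1d) (i := m+1) h1d le_rfl
          exact this.trans (congrArg Bool.not (par_congr (by omega)))
        have hc'val : c' = !par ((m:ℤ)+1) := by
          rw [← hc' _ (Finset.mem_insert_self _ _), hgu]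
        refine ⟨!par ((m:ℤ)+1), fun e heP => ?_⟩
        by_cases heW : e = westEdge (G.pos (m+2))
        · subst heW
          rw [uval_west (by omega) hm2d]
          congr 1
          exact par_congr (by omega)
        · by_cases heE : e = eastEdge (G.pos (m+2))
          · subst heE
            rw [uval_east (by omega) hm2d (hPb _ heP).2]
            exact par_not (by omega)
          · have hmem2 : e ∈ (P.erase (westEdge (G.pos (m+2)))).erase
                (eastEdge (G.pos (m+2))) :=
              Finset.mem_erase.2 ⟨heE, Finset.mem_erase.2 ⟨heW, heP⟩⟩
            rw [← htrans e hmem2, hc' e (Finset.mem_insert_of_mem hmem2), hc'val]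

end SnakeSign
namespace SnakeSign

open SnakeGraph

private lemma sign_south {G : SnakeGraph} {f : Edge → Bool} (hf : G.IsSignFunction f) :
    ∀ i, 1 ≤ i → i ≤ G.d →
      f (southEdge (G.pos i)) = Bool.xor (f (southEdge (G.pos 1))) (par ((i:ℤ) - 1)) := by
  intro i hi
  induction i, hi using Nat.le_induction with
  | base =>
    intro _
    have hp : par (((1:ℕ):ℤ) - 1) = false := by norm_num [par]
    rw [hp, Bool.xor_false]
  | succ n hn ihn =>
    intro hd2
    have ihv := ihn (by omega)
    have key : f (southEdge (G.pos (n+1))) = ! f (southEdge (G.pos n)) := by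
      have hax := hf n hn (by omega)
      have hax2 := hf (n+1) (by omega) hd2
      have hps := pos_succ G n hn
      obtain ⟨g1, g2, g3⟩ := hax
      cases hsn : G.step n with
      | true =>
        rw [hsn, if_pos rfl] at hps
        have hWE : westEdge (G.pos (n+1)) = eastEdge (G.pos n) := by rw [hps]; rfl
        obtain ⟨h1, h2, h3⟩ := hax2
        have hchain : f (southEdge (G.pos n)) = ! f (southEdge (G.pos (n+1))) := by
          rw [g2, ← hWE, ← h1, h3]
        rw [hchain, Bool.not_not]
      | false =>
        rw [hsn, if_neg (by simp)] at hps
        have hSN : southEdge (G.pos (n+1)) = northEdge (G.pos n) := by rw [hps]; rfl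
        rw [hSN, g3]
    rw [key, ihv]
    have hp : par (((n+1:ℕ):ℤ) - 1) = !par ((n:ℤ) - 1) := par_not (by push_cast; omega)
    rw [hp]
    cases f (southEdge (G.pos 1)) <;> cases par ((n:ℤ) - 1) <;> rfl

private lemma f_of_NE {G : SnakeGraph} {f : Edge → Bool} (hf : G.IsSignFunction f) {e : Edge}
    (hne : G.IsNE e) :
    f e = !(Bool.xor (f (southEdge (G.pos 1))) (uval G e)) := by
  obtain ⟨⟨hmem, hnint⟩, i, hi1, hid, hrole⟩ := hne
  obtain ⟨h1, h2, h3⟩ := hf i hi1 hid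
  have hS := sign_south hf i hi1 hid
  have hp : par ((i:ℤ) - 1) = !par (i:ℤ) := par_not (by omega)
  rcases hrole with rfl | rfl
  · rw [uval_north hi1 hid, h3, hS, hp]
    try (cases f (southEdge (G.pos 1)) <;> cases par (i:ℤ) <;> rfl)
  · rw [uval_east hi1 hid hnint, ← h2, hS, hp]
    try (cases f (southEdge (G.pos 1)) <;> cases par (i:ℤ) <;> rfl)

private lemma f_of_SW {G : SnakeGraph} {f : Edge → Bool} (hf : G.IsSignFunction f) {e : Edge}
    (hsw : G.IsSW e) :
    f e = Bool.xor (f (southEdge (G.pos 1))) (uval G e) := by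
  obtain ⟨⟨hmem, hnint⟩, i, hi1, hid, hrole⟩ := hsw
  obtain ⟨h1, h2, h3⟩ := hf i hi1 hid
  have hS := sign_south hf i hi1 hid
  rcases hrole with rfl | rfl
  · rw [uval_south hi1 hid hnint, hS]
  · rw [uval_west hi1 hid, ← h1, h3, hS]
    try (cases f (southEdge (G.pos 1)) <;> cases par ((i:ℤ) - 1) <;> rfl)

end SnakeSign

/-- Let `𝒢` be a snake graph with sign function `f` and `P` a
perfect matching of `𝒢` consisting only of boundary edges.  Any two edges of `P`
which both lie in `NE`, or both lie in `SW`, have the same sign, and any edge of `P`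
in `NE` and any edge of `P` in `SW` have opposite signs. -/
theorem sign_on_boundary_matching (G : SnakeGraph) (f : Edge → Bool) (P : Finset Edge)
    (hf : G.IsSignFunction f) (hP : G.IsPerfectMatching P)
    (hPb : ∀ e ∈ P, G.IsBoundaryEdge e) :
    (∀ a ∈ P, ∀ b ∈ P,
        ((G.IsNE a ∧ G.IsNE b) ∨ (G.IsSW a ∧ G.IsSW b)) → f a = f b) ∧
    (∀ a ∈ P, ∀ b ∈ P, G.IsNE a → G.IsSW b → f a = ! f b) := by
  obtain ⟨hPe, hPm⟩ := hP
  obtain ⟨c, hc⟩ := SnakeSign.core (G.d - 1) G P (by have := G.one_le_d; omega) hPe hPm hPb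
  constructor
  · rintro a ha b hb (⟨hna, hnb⟩ | ⟨hsa, hsb⟩)
    · rw [SnakeSign.f_of_NE hf hna, SnakeSign.f_of_NE hf hnb, hc a ha, hc b hb]
    · rw [SnakeSign.f_of_SW hf hsa, SnakeSign.f_of_SW hf hsb, hc a ha, hc b hb]
  · intro a ha b hb hna hsb
    rw [SnakeSign.f_of_NE hf hna, SnakeSign.f_of_SW hf hsb, hc a ha, hc b hb]
end

section
/- Every nonempty snake graph admits exactly two sign functions, and these two sign functions assign opposite signs to every edge (i.e., if f is a sign function then −f is the only other sign function). -/
-- relations on a tile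
lemma tile_rel {G : SnakeGraph} {f : Edge → Bool} (hf : G.IsSignFunction f)
    {i : ℕ} (h1 : 1 ≤ i) (h2 : i ≤ G.d) :
    f (northEdge (G.pos i)) = ! f (southEdge (G.pos i)) ∧
    f (westEdge (G.pos i)) = ! f (southEdge (G.pos i)) ∧
    f (eastEdge (G.pos i)) = f (southEdge (G.pos i)) := by
  obtain ⟨hnw, hse, hns⟩ := hf i h1 h2
  exact ⟨hns, by rw [← hnw, hns], hse.symm⟩

lemma pos_succ (G : SnakeGraph) {i : ℕ} (h1 : 1 ≤ i) :
    G.pos (i + 1) = G.pos i +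
      (if G.step i then ((1 : ℤ), (0 : ℤ)) else ((0 : ℤ), (1 : ℤ))) := by
  unfold SnakeGraph.pos
  rw [Finset.sum_Ico_succ_top h1, add_assoc]

lemma south_agree {G : SnakeGraph} {f g : Edge → Bool}
    (hf : G.IsSignFunction f) (hg : G.IsSignFunction g)
    (h : f (southEdge (G.pos 1)) = g (southEdge (G.pos 1))) :
    ∀ i, 1 ≤ i → i ≤ G.d →
      f (southEdge (G.pos i)) = g (southEdge (G.pos i)) := by
  intro i
  induction i with
  | zero => omega
  | succ n ih =>
    intro h1 h2
    rcases Nat.eq_or_lt_of_le h1 with h1' | h1'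
    · rw [← h1']; exact h
    · have hn1 : 1 ≤ n := by omega
      have hnd : n ≤ G.d := by omega
      have hprev := ih hn1 hnd
      rw [pos_succ G hn1]
      cases hs : G.step n with
      | true =>
        simp only [hs, reduceIte]
        -- westEdge (pos n + (1,0)) = eastEdge (pos n)
        have hw : westEdge (G.pos n + ((1:ℤ),(0:ℤ))) = eastEdge (G.pos n) := rfl
        have hfr := tile_rel hf h1 h2
        have hgr := tile_rel hg h1 h2
        rw [pos_succ G hn1, hs] at hfr hgr
        simp only [reduceIte] at hfr hgr
        have hf2 : f (southEdge (G.pos n + ((1:ℤ),(0:ℤ)))) =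
            ! f (eastEdge (G.pos n)) := by
          rw [← hw, hfr.2.1, Bool.not_not]
        have hg2 : g (southEdge (G.pos n + ((1:ℤ),(0:ℤ)))) =
            ! g (eastEdge (G.pos n)) := by
          rw [← hw, hgr.2.1, Bool.not_not]
        rw [hf2, hg2, (tile_rel hf hn1 hnd).2.2, (tile_rel hg hn1 hnd).2.2, hprev]
      | false =>
        simp only [hs, Bool.false_eq_true, if_false]
        have hn : southEdge (G.pos n + ((0:ℤ),(1:ℤ))) = northEdge (G.pos n) := rfl
        rw [hn, (tile_rel hf hn1 hnd).1, (tile_rel hg hn1 hnd).1, hprev]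

lemma agree_on_edges {G : SnakeGraph} {f g : Edge → Bool}
    (hf : G.IsSignFunction f) (hg : G.IsSignFunction g)
    (h : f (southEdge (G.pos 1)) = g (southEdge (G.pos 1))) :
    ∀ e ∈ G.edges, g e = f e := by
  intro e he
  obtain ⟨i, hi, he⟩ := Finset.mem_biUnion.mp he
  rw [Finset.mem_Icc] at hi
  have hsa := south_agree hf hg h i hi.1 hi.2
  have hfr := tile_rel hf hi.1 hi.2
  have hgr := tile_rel hg hi.1 hi.2
  simp only [tileEdges, Finset.mem_insert, Finset.mem_singleton] at he
  rcases he with rfl | rfl | rfl | rfl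
  · exact hsa.symm
  · rw [hfr.1, hgr.1, hsa]
  · rw [hfr.2.1, hgr.2.1, hsa]
  · rw [hfr.2.2, hgr.2.2, hsa]

/-- Every (nonempty) snake graph admits exactly two sign functions,
and these two assign opposite signs to every edge: there exists a sign function `f`;
for any sign function `f`, the pointwise negation `¬f` is again a sign function,
`f` and `¬f` are distinct as functions on the edge set of `𝒢`, and every sign
function agrees on the edge set of `𝒢` with `f` or with `¬f`. -/
theorem exactly_two_sign_functions (G : SnakeGraph) :
    (∃ f : Edge → Bool, G.IsSignFunction f) ∧
    (∀ f : Edge → Bool, G.IsSignFunction f →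
      (G.IsSignFunction fun e => ! f e) ∧
      (¬ ∀ e ∈ G.edges, f e = ! f e) ∧
      (∀ g : Edge → Bool, G.IsSignFunction g →
        (∀ e ∈ G.edges, g e = f e) ∨ (∀ e ∈ G.edges, g e = ! f e))) := by
  constructor
  · refine ⟨fun e => xor (decide ((e.1.1 + e.1.2) % 2 = 0)) (!e.2), ?_⟩
    intro i _ _
    set p := G.pos i
    refine ⟨?_, ?_, ?_⟩ <;>
    · simp only [northEdge, southEdge, westEdge, eastEdge]
      have : (p + ((0:ℤ),(1:ℤ))).1 + (p + ((0:ℤ),(1:ℤ))).2 = p.1 + p.2 + 1 := by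
        simp [Prod.fst_add, Prod.snd_add]; ring
      have h2 : (p + ((1:ℤ),(0:ℤ))).1 + (p + ((1:ℤ),(0:ℤ))).2 = p.1 + p.2 + 1 := by
        simp [Prod.fst_add, Prod.snd_add]; ring
      simp only [this, h2]
      rcases Int.even_or_odd (p.1 + p.2) with he | ho
      · have h0 : (p.1 + p.2) % 2 = 0 := Int.even_iff.mp he
        have h1 : (p.1 + p.2 + 1) % 2 = 1 := by omega
        simp [h0, h1]
      · have h0 : (p.1 + p.2) % 2 = 1 := Int.odd_iff.mp ho
        have h1 : (p.1 + p.2 + 1) % 2 = 0 := by omega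
        simp [h0, h1]
  · intro f hf
    refine ⟨?_, ?_, ?_⟩
    · intro i h1 h2
      obtain ⟨a, b, c⟩ := hf i h1 h2
      exact ⟨by simp only [a], by simp only [b], by simp only [c, Bool.not_not]⟩
    · intro hbad
      have hmem : southEdge (G.pos 1) ∈ G.edges := by
        apply Finset.mem_biUnion.mpr
        exact ⟨1, Finset.mem_Icc.mpr ⟨le_refl 1, G.one_le_d⟩, by simp [tileEdges]⟩
      have := hbad _ hmem
      simp at this
    · intro g hg
      by_cases hc : f (southEdge (G.pos 1)) = g (southEdge (G.pos 1))
      · exact Or.inl (agree_on_edges hf hg hc)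
      · right
        have hf' : G.IsSignFunction fun e => ! f e := by
          intro i h1 h2
          obtain ⟨a, b, c⟩ := hf i h1 h2
          exact ⟨by simp only [a], by simp only [b], by simp only [c, Bool.not_not]⟩
        have hc' : (fun e => ! f e) (southEdge (G.pos 1)) = g (southEdge (G.pos 1)) := by
          simp only
          cases hfv : f (southEdge (G.pos 1)) <;> cases hgv : g (southEdge (G.pos 1)) <;>
            simp_all
        exact agree_on_edges hf' hg hc'
end
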